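/- arXiv:2003.14145 — 8 statements merged into one kernel-verified Lean document; each statement's English description precedes it below -/
import Mathlib

section
/- Assume ∫ ‖x‖^r dP(x) < +∞ and let (a_n)_{n≥1} be an L^r-optimal greedy quantization sequence for P. Then for every Borel probability measure ν on ℝ^d, every c ∈ (0,1/2) and every n ≥ 1: e_r(a^{(n)},P)^r − e_r(a^{(n+1)},P)^r ≥ ((1−c)^r − c^r)/(c+1)^r · ∫ ν(B(x, (c/(c+1))·d(x,a^{(n)}))) · d(x,a^{(n)})^r dP(x). -/
open MeasureTheory Metric
open scoped ENNReal NNReal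

/-- The `L^r`-quantization error of a grid `Γ` with respect to the measure `P`:
`e_r(Γ,P) = (∫ d(x,Γ)^r dP(x))^(1/r)`. -/
noncomputable def qerr {E : Type*} [NormedAddCommGroup E] [MeasurableSpace E]
    (r : ℝ) (P : Measure E) (Γ : Set E) : ℝ :=
  (∫ x, infDist x Γ ^ r ∂P) ^ (1 / r)

/-- The first `n` points `a^{(n)} = {a 1, …, a n}` of a sequence `a`. -/
def aSet {E : Type*} (a : ℕ → E) (n : ℕ) : Set E := a '' Set.Icc 1 n

/-- `(a_n)_{n ≥ 1}` is an `L^r`-optimal greedy quantization sequence for `P`: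
for every `n ≥ 0`, `a (n+1)` minimizes `ξ ↦ e_r(a^{(n)} ∪ {ξ}, P)`
(the case `n = 0` says `a 1` minimizes `ξ ↦ e_r({ξ},P)`). -/
def IsGreedy {E : Type*} [NormedAddCommGroup E] [MeasurableSpace E]
    (r : ℝ) (P : Measure E) (a : ℕ → E) : Prop :=
  ∀ (n : ℕ) (ξ : E), qerr r P (aSet a (n + 1)) ≤ qerr r P (insert ξ (aSet a n))

lemma my_infDist_insert {E : Type*} [NormedAddCommGroup E] {s : Set E} (hs : s.Nonempty)
    (x ξ : E) : infDist x (insert ξ s) = min (dist x ξ) (infDist x s) := by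
  rw [Metric.infDist, Metric.infDist, ← Set.singleton_union, EMetric.infEdist_union,
    EMetric.infEdist_singleton,
    ENNReal.toReal_min (by simp [edist_ne_top]) (Metric.infEdist_ne_top hs), dist_edist]

lemma my_qerr_rpow (r : ℝ) (hr : 0 < r) {E : Type*} [NormedAddCommGroup E] [MeasurableSpace E]
    (P : Measure E) (Γ : Set E) : qerr r P Γ ^ r = ∫ x, infDist x Γ ^ r ∂P := by
  have hI : 0 ≤ ∫ x, infDist x Γ ^ r ∂P :=
    integral_nonneg fun x => Real.rpow_nonneg infDist_nonneg r
  rw [qerr, ← Real.rpow_mul hI, one_div, inv_mul_cancel₀ hr.ne', Real.rpow_one]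

lemma my_two_rpow (r : ℝ) (hr : 0 < r) {u v : ℝ} (hu : 0 ≤ u) (hv : 0 ≤ v) :
    (u + v) ^ r ≤ 2 ^ r * (u ^ r + v ^ r) := by
  have h1 : u + v ≤ 2 * max u v := by
    rcases le_total u v with h | h
    · rw [max_eq_right h]; linarith
    · rw [max_eq_left h]; linarith
  calc (u + v) ^ r ≤ (2 * max u v) ^ r :=
        Real.rpow_le_rpow (by positivity) h1 hr.le
    _ = 2 ^ r * (max u v) ^ r := Real.mul_rpow (by norm_num) (le_max_of_le_left hu)
    _ ≤ 2 ^ r * (u ^ r + v ^ r) := by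
        apply mul_le_mul_of_nonneg_left _ (Real.rpow_nonneg (by norm_num) r)
        rcases le_total u v with h | h
        · rw [max_eq_right h]
          nlinarith [Real.rpow_nonneg hu r]
        · rw [max_eq_left h]
          nlinarith [Real.rpow_nonneg hv r]

/-- Increment micro-macro inequality for greedy quantization sequences, with an auxiliary
probability measure `ν`. -/
theorem stmt_1 {E : Type*} [NormedAddCommGroup E] [NormedSpace ℝ E]
    [FiniteDimensional ℝ E] [MeasurableSpace E] [BorelSpace E]
    (r : ℝ) (hr : 0 < r)
    (P : Measure E) [IsProbabilityMeasure P]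
    (hmom : (∫⁻ x, (‖x‖₊ : ℝ≥0∞) ^ r ∂P) < ⊤)
    (a : ℕ → E) (ha : IsGreedy r P a)
    (ν : Measure E) [IsProbabilityMeasure ν]
    (c : ℝ) (hc : c ∈ Set.Ioo (0 : ℝ) (1 / 2))
    (n : ℕ) (hn : 1 ≤ n) :
    ((1 - c) ^ r - c ^ r) / (c + 1) ^ r *
        ∫ x, (ν (closedBall x (c / (c + 1) * infDist x (aSet a n)))).toReal
          * infDist x (aSet a n) ^ r ∂P
      ≤ qerr r P (aSet a n) ^ r - qerr r P (aSet a (n + 1)) ^ r := by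
  obtain ⟨hc0, hc12⟩ := hc
  have hc1 : c < 1 := by linarith
  have hcp : (0 : ℝ) < c + 1 := by linarith
  set Γ : Set E := aSet a n with hΓdef
  have hΓne : Γ.Nonempty := ⟨a 1, ⟨1, ⟨le_refl 1, hn⟩, rfl⟩⟩
  set D : E → ℝ := fun x => infDist x Γ with hDdef
  have hD0 : ∀ x, 0 ≤ D x := fun x => infDist_nonneg
  have hDcont : Continuous D := continuous_infDist_pt Γ
  set κ : ℝ := ((1 - c) ^ r - c ^ r) / (c + 1) ^ r with hκdef
  have hκ0 : 0 ≤ κ :=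
    div_nonneg (sub_nonneg.2 (Real.rpow_le_rpow hc0.le (by linarith) hr.le))
      (Real.rpow_nonneg hcp.le r)
  -- κ ≤ 1 - (c/(c+1))^r
  have hκle : κ ≤ 1 - (c / (c + 1)) ^ r := by
    have h1 : (c / (c + 1)) ^ r = c ^ r / (c + 1) ^ r := Real.div_rpow hc0.le hcp.le r
    have h2 : κ + c ^ r / (c + 1) ^ r ≤ 1 := by
      rw [hκdef, ← add_div, sub_add_cancel,
        div_le_one (Real.rpow_pos_of_pos hcp r)]
      exact Real.rpow_le_rpow (by linarith) (by linarith) hr.le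
    linarith [h1, h2]
  -- key pointwise inequality on the ball
  have hptwise : ∀ x ξ : E, dist ξ x ≤ c / (c + 1) * D x →
      κ * D x ^ r ≤ D x ^ r - min (dist x ξ) (D x) ^ r := by
    intro x ξ hξ
    have hmin0 : 0 ≤ min (dist x ξ) (D x) := le_min dist_nonneg (hD0 x)
    have h1 : min (dist x ξ) (D x) ^ r ≤ (c / (c + 1) * D x) ^ r := by
      apply Real.rpow_le_rpow hmin0 _ hr.le
      calc min (dist x ξ) (D x) ≤ dist x ξ := min_le_left _ _
        _ = dist ξ x := dist_comm _ _
        _ ≤ c / (c + 1) * D x := hξ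
    have h2 : (c / (c + 1) * D x) ^ r = (c / (c + 1)) ^ r * D x ^ r :=
      Real.mul_rpow (by positivity) (hD0 x)
    have h3 : κ * D x ^ r ≤ (1 - (c / (c + 1)) ^ r) * D x ^ r :=
      mul_le_mul_of_nonneg_right hκle (Real.rpow_nonneg (hD0 x) r)
    nlinarith [h1, h2, h3]
  -- lintegral quantities
  set L : ℝ≥0∞ := ∫⁻ x, ENNReal.ofReal (D x ^ r) ∂P with hLdef
  -- finiteness of L
  have hLne : L ≠ ⊤ := by
    have hbd : ∀ x : E, ENNReal.ofReal (D x ^ r) ≤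
        ENNReal.ofReal (2 ^ r) * ((‖x‖₊ : ℝ≥0∞) ^ r + ENNReal.ofReal (‖a 1‖ ^ r)) := by
      intro x
      have hD_le : D x ≤ ‖x‖ + ‖a 1‖ := by
        calc D x ≤ dist x (a 1) := infDist_le_dist_of_mem ⟨1, ⟨le_refl 1, hn⟩, rfl⟩
          _ = ‖x - a 1‖ := dist_eq_norm _ _
          _ ≤ ‖x‖ + ‖a 1‖ := norm_sub_le _ _
      have h1 : D x ^ r ≤ 2 ^ r * (‖x‖ ^ r + ‖a 1‖ ^ r) := by
        calc D x ^ r ≤ (‖x‖ + ‖a 1‖) ^ r :=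
              Real.rpow_le_rpow (hD0 x) hD_le hr.le
          _ ≤ 2 ^ r * (‖x‖ ^ r + ‖a 1‖ ^ r) :=
              my_two_rpow r hr (norm_nonneg _) (norm_nonneg _)
      calc ENNReal.ofReal (D x ^ r) ≤ ENNReal.ofReal (2 ^ r * (‖x‖ ^ r + ‖a 1‖ ^ r)) :=
            ENNReal.ofReal_le_ofReal h1
        _ = ENNReal.ofReal (2 ^ r) * (ENNReal.ofReal (‖x‖ ^ r) + ENNReal.ofReal (‖a 1‖ ^ r)) := by
            rw [ENNReal.ofReal_mul (by positivity),
              ENNReal.ofReal_add (by positivity) (by positivity)]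
        _ = ENNReal.ofReal (2 ^ r) * ((‖x‖₊ : ℝ≥0∞) ^ r + ENNReal.ofReal (‖a 1‖ ^ r)) := by
            rw [← ENNReal.ofReal_rpow_of_nonneg (norm_nonneg x) hr.le, ofReal_norm, enorm_eq_nnnorm]
    have : L ≤ ENNReal.ofReal (2 ^ r) *
        ((∫⁻ x, (‖x‖₊ : ℝ≥0∞) ^ r ∂P) + ENNReal.ofReal (‖a 1‖ ^ r)) := by
      calc L ≤ ∫⁻ x, ENNReal.ofReal (2 ^ r) *
            ((‖x‖₊ : ℝ≥0∞) ^ r + ENNReal.ofReal (‖a 1‖ ^ r)) ∂P := lintegral_mono hbd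
        _ = ENNReal.ofReal (2 ^ r) * ∫⁻ x, ((‖x‖₊ : ℝ≥0∞) ^ r + ENNReal.ofReal (‖a 1‖ ^ r)) ∂P :=
            lintegral_const_mul' _ _ ENNReal.ofReal_ne_top
        _ = ENNReal.ofReal (2 ^ r) *
            ((∫⁻ x, (‖x‖₊ : ℝ≥0∞) ^ r ∂P) + ENNReal.ofReal (‖a 1‖ ^ r)) := by
            rw [lintegral_add_right _ measurable_const, lintegral_const, measure_univ, mul_one]
    exact ne_top_of_le_ne_top (by
      apply ENNReal.mul_ne_top ENNReal.ofReal_ne_top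
      exact ENNReal.add_ne_top.2 ⟨hmom.ne, ENNReal.ofReal_ne_top⟩) this
  -- identify qerr Γ ^ r with L.toReal
  have hDmeas : Measurable fun x => D x ^ r :=
    ((Real.continuous_rpow_const hr.le).comp hDcont).measurable
  have hIn : qerr r P Γ ^ r = L.toReal := by
    rw [my_qerr_rpow r hr]
    exact integral_eq_lintegral_of_nonneg_ae
      (Filter.Eventually.of_forall fun x => Real.rpow_nonneg (hD0 x) r)
      hDmeas.aestronglyMeasurable
  -- the greedy bound
  set Q : ℝ := qerr r P (aSet a (n + 1)) ^ r with hQdef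
  have hQ0 : 0 ≤ Q := by
    rw [hQdef, my_qerr_rpow r hr]
    exact integral_nonneg fun x => Real.rpow_nonneg infDist_nonneg r
  set M : E → ℝ≥0∞ := fun ξ => ∫⁻ x, ENNReal.ofReal (min (dist x ξ) (D x) ^ r) ∂P with hMdef
  have hMle : ∀ ξ, M ξ ≤ L := by
    intro ξ
    apply lintegral_mono
    intro x
    exact ENNReal.ofReal_le_ofReal
      (Real.rpow_le_rpow (le_min dist_nonneg (hD0 x)) (min_le_right _ _) hr.le)
  have hQM : ∀ ξ : E, ENNReal.ofReal Q ≤ M ξ := by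
    intro ξ
    have h1 : Q ≤ qerr r P (insert ξ Γ) ^ r := by
      rw [hQdef]
      have h0 : 0 ≤ qerr r P (aSet a (n + 1)) :=
        Real.rpow_nonneg (integral_nonneg fun x => Real.rpow_nonneg infDist_nonneg r) _
      exact Real.rpow_le_rpow h0 (ha n ξ) hr.le
    have h2 : qerr r P (insert ξ Γ) ^ r = (M ξ).toReal := by
      rw [my_qerr_rpow r hr]
      have heq : ∀ x : E, infDist x (insert ξ Γ) ^ r = min (dist x ξ) (D x) ^ r := by
        intro x; rw [my_infDist_insert hΓne]
      simp_rw [heq]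
      exact integral_eq_lintegral_of_nonneg_ae
        (Filter.Eventually.of_forall fun x =>
          Real.rpow_nonneg (le_min dist_nonneg (hD0 x)) r)
        (((Real.continuous_rpow_const hr.le).comp
          ((continuous_id.dist continuous_const).min hDcont)).aestronglyMeasurable)
    rw [ENNReal.ofReal_le_iff_le_toReal (ne_top_of_le_ne_top hLne (hMle ξ))]
    rw [← h2]; exact h1
    -- difference of lintegrals
  set K : E → ℝ≥0∞ :=
    fun ξ => ∫⁻ x, ENNReal.ofReal (D x ^ r - min (dist x ξ) (D x) ^ r) ∂P with hKdef
  have hMcont : ∀ ξ : E, Continuous fun x => ENNReal.ofReal (min (dist x ξ) (D x) ^ r) :=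
    fun ξ => ENNReal.continuous_ofReal.comp ((Real.continuous_rpow_const hr.le).comp
      ((continuous_id.dist continuous_const).min hDcont))
  have hK : ∀ ξ, K ξ = L - M ξ := by
    intro ξ
    have hpt : ∀ x : E, ENNReal.ofReal (D x ^ r - min (dist x ξ) (D x) ^ r)
        = ENNReal.ofReal (D x ^ r) - ENNReal.ofReal (min (dist x ξ) (D x) ^ r) := fun x =>
      ENNReal.ofReal_sub _ (Real.rpow_nonneg (le_min dist_nonneg (hD0 x)) r)
    rw [hKdef]
    simp_rw [hpt]
    exact lintegral_sub (hMcont ξ).measurable (ne_top_of_le_ne_top hLne (hMle ξ))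
      (Filter.Eventually.of_forall fun x => ENNReal.ofReal_le_ofReal
        (Real.rpow_le_rpow (le_min dist_nonneg (hD0 x)) (min_le_right _ _) hr.le))
  have hKle : ∀ ξ, K ξ ≤ L - ENNReal.ofReal Q := fun ξ => by
    rw [hK ξ]; exact tsub_le_tsub_left (hQM ξ) L
  -- Fubini
  have hFcont : Continuous fun p : E × E =>
      ENNReal.ofReal (D p.1 ^ r - min (dist p.1 p.2) (D p.1) ^ r) := by
    apply ENNReal.continuous_ofReal.comp
    apply Continuous.sub
    · exact (Real.continuous_rpow_const hr.le).comp (hDcont.comp continuous_fst)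
    · exact (Real.continuous_rpow_const hr.le).comp
        ((continuous_fst.dist continuous_snd).min (hDcont.comp continuous_fst))
  have hswap : ∫⁻ ξ, K ξ ∂ν
      = ∫⁻ x, ∫⁻ ξ, ENNReal.ofReal (D x ^ r - min (dist x ξ) (D x) ^ r) ∂ν ∂P := by
    rw [hKdef]
    exact lintegral_lintegral_swap
      ((hFcont.measurable.comp measurable_swap).aemeasurable)
  -- inner bound
  have hinner : ∀ x : E,
      ν (closedBall x (c / (c + 1) * D x)) * ENNReal.ofReal (κ * D x ^ r)
        ≤ ∫⁻ ξ, ENNReal.ofReal (D x ^ r - min (dist x ξ) (D x) ^ r) ∂ν := by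
    intro x
    calc ν (closedBall x (c / (c + 1) * D x)) * ENNReal.ofReal (κ * D x ^ r)
        = ∫⁻ _ in closedBall x (c / (c + 1) * D x), ENNReal.ofReal (κ * D x ^ r) ∂ν := by
          rw [setLIntegral_const, mul_comm]
      _ ≤ ∫⁻ ξ in closedBall x (c / (c + 1) * D x),
            ENNReal.ofReal (D x ^ r - min (dist x ξ) (D x) ^ r) ∂ν := by
          apply setLIntegral_mono
            (ENNReal.continuous_ofReal.comp ((continuous_const.sub
              ((Real.continuous_rpow_const hr.le).comp
                ((continuous_const.dist continuous_id).min continuous_const))))).measurable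
          intro ξ hξ
          exact ENNReal.ofReal_le_ofReal (hptwise x ξ (mem_closedBall.mp hξ))
      _ ≤ ∫⁻ ξ, ENNReal.ofReal (D x ^ r - min (dist x ξ) (D x) ^ r) ∂ν :=
          setLIntegral_le_lintegral _ _
  -- the main lintegral bound
  set Λ : ℝ≥0∞ := ∫⁻ x, ν (closedBall x (c / (c + 1) * D x)) * ENNReal.ofReal (κ * D x ^ r) ∂P
    with hΛdef
  have hΛle : Λ ≤ L - ENNReal.ofReal Q := by
    calc Λ ≤ ∫⁻ x, ∫⁻ ξ, ENNReal.ofReal (D x ^ r - min (dist x ξ) (D x) ^ r) ∂ν ∂P :=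
        lintegral_mono hinner
      _ = ∫⁻ ξ, K ξ ∂ν := hswap.symm
      _ ≤ ∫⁻ _, (L - ENNReal.ofReal Q) ∂ν := lintegral_mono hKle
      _ = L - ENNReal.ofReal Q := by rw [lintegral_const, measure_univ, mul_one]
  -- measurability of the ball-measure function
  have hνmeas : Measurable fun x => ν (closedBall x (c / (c + 1) * D x)) := by
    have hS : MeasurableSet {p : E × E | dist p.2 p.1 ≤ c / (c + 1) * D p.1} := by
      apply IsClosed.measurableSet
      exact isClosed_le (continuous_snd.dist continuous_fst)
        (continuous_const.mul (hDcont.comp continuous_fst))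
    have := measurable_measure_prodMk_left (ν := ν) hS
    convert this using 2
    rfl
  -- identify the LHS with Λ.toReal
  have hA : κ * (∫ x, (ν (closedBall x (c / (c + 1) * D x))).toReal * D x ^ r ∂P)
      = Λ.toReal := by
    rw [← integral_const_mul]
    have hpt : ∀ x : E,
        ν (closedBall x (c / (c + 1) * D x)) * ENNReal.ofReal (κ * D x ^ r)
          = ENNReal.ofReal (κ * ((ν (closedBall x (c / (c + 1) * D x))).toReal * D x ^ r)) := by
      intro x
      nth_rewrite 1 [← ENNReal.ofReal_toReal (measure_ne_top ν _)]
      rw [← ENNReal.ofReal_mul ENNReal.toReal_nonneg]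
      congr 1
      ring
    rw [hΛdef]
    simp_rw [hpt]
    exact integral_eq_lintegral_of_nonneg_ae
      (Filter.Eventually.of_forall fun x => mul_nonneg hκ0
        (mul_nonneg ENNReal.toReal_nonneg (Real.rpow_nonneg (hD0 x) r)))
      (((hνmeas.ennreal_toReal.mul hDmeas).const_mul κ).aestronglyMeasurable)
  -- conclude
  have hQL : ENNReal.ofReal Q ≤ L := le_trans (hQM (a 1)) (hMle (a 1))
  rw [hIn]
  calc κ * ∫ x, (ν (closedBall x (c / (c + 1) * D x))).toReal * D x ^ r ∂P
      = Λ.toReal := hA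
    _ ≤ (L - ENNReal.ofReal Q).toReal :=
        ENNReal.toReal_mono ((tsub_le_self.trans_lt hLne.lt_top).ne) hΛle
    _ = L.toReal - Q := by
        rw [ENNReal.toReal_sub_of_le hQL hLne, ENNReal.toReal_ofReal hQ0]
end

section
/- Let C, ρ ∈ (0,+∞) and let (x_n)_{n≥1} be a sequence of non-negative real numbers satisfying x_{n+1} ≤ x_n − C·x_n^{1+ρ} for every n ≥ 1. Then for every n ≥ 1, (n−1)^{1/ρ} · x_n ≤ (1/(Cρ))^{1/ρ}. -/
lemma bern_aux (t ρ : ℝ) (ht0 : 0 ≤ t) (ht1 : t < 1) (hρ : 0 < ρ) :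
    1 + ρ * t ≤ (1 - t) ^ (-ρ) := by
  have h1 : (0:ℝ) < 1 - t := by linarith
  rw [Real.rpow_def_of_pos h1]
  have hlog : Real.log (1 - t) ≤ -t := by
    have := Real.log_le_sub_one_of_pos h1
    linarith
  have h2 : ρ * t ≤ Real.log (1 - t) * (-ρ) := by nlinarith
  have h3 : ρ * t + 1 ≤ Real.exp (ρ * t) := Real.add_one_le_exp _
  have h4 : Real.exp (ρ * t) ≤ Real.exp (Real.log (1 - t) * (-ρ)) :=
    Real.exp_le_exp.mpr h2
  linarith

/-- If a non-negative sequence satisfies `x_{n+1} ≤ x_n − C x_n^{1+ρ}` for all `n ≥ 1`,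
then `(n−1)^{1/ρ} x_n ≤ (1/(Cρ))^{1/ρ}` for all `n ≥ 1`. -/
theorem stmt_2 (C ρ : ℝ) (hC : 0 < C) (hρ : 0 < ρ)
    (x : ℕ → ℝ) (hx : ∀ n : ℕ, 1 ≤ n → 0 ≤ x n)
    (hrec : ∀ n : ℕ, 1 ≤ n → x (n + 1) ≤ x n - C * x n ^ (1 + ρ)) :
    ∀ n : ℕ, 1 ≤ n → ((n : ℝ) - 1) ^ (1 / ρ) * x n ≤ (1 / (C * ρ)) ^ (1 / ρ) := by
  -- key: for all n ≥ 1 with x n > 0, C*ρ*(n-1) ≤ (x n)^(-ρ)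
  have key : ∀ n : ℕ, 1 ≤ n → 0 < x n → C * ρ * ((n : ℝ) - 1) ≤ (x n) ^ (-ρ) := by
    intro n
    induction n with
    | zero => intro h; omega
    | succ m ih =>
      intro _ hpos
      rcases Nat.eq_or_lt_of_le (Nat.one_le_iff_ne_zero.mpr (Nat.succ_ne_zero m)) with h1 | h1
      · -- m + 1 = 1
        have hm : m = 0 := by omega
        subst hm
        push_cast
        have : C * ρ * ((1:ℝ) - 1) = 0 := by ring
        rw [this]
        exact (Real.rpow_pos_of_pos hpos _).le
      · have hm1 : 1 ≤ m := by omega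
        have hrec' := hrec m hm1
        have hxm : 0 ≤ x m := hx m hm1
        -- x m > 0 since x (m+1) ≤ x m - C * x m ^ (1+ρ) ≤ x m
        have hxmpos : 0 < x m := by
          by_contra h
          push_neg at h
          have hxm0 : x m = 0 := le_antisymm h hxm
          rw [hxm0] at hrec'
          have : (0:ℝ) ^ (1 + ρ) = 0 := Real.zero_rpow (by positivity)
          rw [this] at hrec'
          linarith
        have ihm := ih hm1 hxmpos
        -- let a := x m, b := x (m+1)
        set a := x m with ha
        set b := x (m+1) with hb
        have hsplit : a ^ (1 + ρ) = a * a ^ ρ := by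
          rw [Real.rpow_add hxmpos, Real.rpow_one]
        have hble : b ≤ a * (1 - C * a ^ ρ) := by
          rw [hsplit] at hrec'; linarith [hrec']
        have ht0 : 0 ≤ C * a ^ ρ := by positivity
        have ht1 : C * a ^ ρ < 1 := by
          by_contra h
          push_neg at h
          have : a * (1 - C * a ^ ρ) ≤ 0 := by nlinarith
          linarith
        -- b^(-ρ) ≥ (a*(1 - C a^ρ))^(-ρ) ≥ a^(-ρ) * (1 + ρ C a^ρ) = a^(-ρ) + ρ C
        have h1t : (0:ℝ) < 1 - C * a ^ ρ := by linarith
        have hbpos : 0 < b := hpos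
        have step1 : (a * (1 - C * a ^ ρ)) ^ (-ρ) ≤ b ^ (-ρ) := by
          apply Real.rpow_le_rpow_of_nonpos hbpos hble (by linarith)
        have step2 : (a * (1 - C * a ^ ρ)) ^ (-ρ)
            = a ^ (-ρ) * (1 - C * a ^ ρ) ^ (-ρ) := by
          rw [Real.mul_rpow hxmpos.le h1t.le]
        have step3 : 1 + ρ * (C * a ^ ρ) ≤ (1 - C * a ^ ρ) ^ (-ρ) :=
          bern_aux _ _ ht0 ht1 hρ
        have hane : a ^ (-ρ) * a ^ ρ = 1 := by
          rw [← Real.rpow_add hxmpos]; simp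
        have step4 : a ^ (-ρ) + C * ρ ≤ a ^ (-ρ) * (1 - C * a ^ ρ) ^ (-ρ) := by
          have hapos : 0 < a ^ (-ρ) := Real.rpow_pos_of_pos hxmpos _
          have := mul_le_mul_of_nonneg_left step3 hapos.le
          calc a ^ (-ρ) + C * ρ
              = a ^ (-ρ) * 1 + ρ * C * (a ^ (-ρ) * a ^ ρ) := by rw [hane]; ring
            _ = a ^ (-ρ) * (1 + ρ * (C * a ^ ρ)) := by ring
            _ ≤ a ^ (-ρ) * (1 - C * a ^ ρ) ^ (-ρ) := this
        have : a ^ (-ρ) + C * ρ ≤ b ^ (-ρ) := by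
          rw [step2] at step1; linarith
        push_cast
        linarith
  -- now conclude
  intro n hn
  have hn1 : (0:ℝ) ≤ (n : ℝ) - 1 := by
    have : (1:ℝ) ≤ (n : ℝ) := by exact_mod_cast hn
    linarith
  have hxn : 0 ≤ x n := hx n hn
  rcases eq_or_lt_of_le hxn with h0 | h0
  · rw [← h0, mul_zero]
    positivity
  · have hk := key n hn h0
    -- (n-1) * x n ^ ρ ≤ 1 / (C * ρ)
    have hprod : ((n:ℝ) - 1) * (x n) ^ ρ ≤ 1 / (C * ρ) := by
      have hxρ : 0 < (x n) ^ ρ := Real.rpow_pos_of_pos h0 _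
      have hinv : (x n) ^ (-ρ) * (x n) ^ ρ = 1 := by
        rw [← Real.rpow_add h0]; simp
      have := mul_le_mul_of_nonneg_right hk hxρ.le
      rw [hinv] at this
      rw [div_eq_inv_mul, le_inv_mul_iff₀ (by positivity)]
      calc C * ρ * (((n:ℝ) - 1) * x n ^ ρ) = C * ρ * ((n:ℝ) - 1) * x n ^ ρ := by ring
        _ ≤ 1 := this
    -- raise to 1/ρ
    have hmono := Real.rpow_le_rpow (by positivity) hprod (by positivity : (0:ℝ) ≤ 1/ρ)
    rw [Real.mul_rpow hn1 (Real.rpow_nonneg hxn _), ← Real.rpow_mul hxn,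
      mul_one_div_cancel hρ.ne', Real.rpow_one] at hmono
    exact hmono
end

section
/- (Hybrid Zador–Pierce rate for greedy quantization.) For every d ≥ 1, r ∈ (0,∞), M ∈ (0,1], C₀ ∈ [1,∞) and p₀ > 0 there exists a constant κ ∈ (0,+∞) such that the following holds. Let P = h·λ_d be a Borel probability measure on ℝ^d with h ∈ L^{d/(d+r)}(λ_d) and ∫ ‖x‖^r dP(x) < +∞, let (a_n)_{n≥1} be an L^r-optimal greedy quantization sequence for P, and let A ⊆ ℝ^d be a Borel set containing supp(P) and a₁, star-shaped with respect to a₁, such that: (i) the peakless constant p(A) := inf{ λ_d(B(x,t)∩A)/λ_d(B(x,t)) : x ∈ A, 0 < t ≤ ‖x−a₁‖ } satisfies p(A) ≥ p₀; (ii) there is a norm ‖·‖₀ on ℝ^d with C₀^{−1}‖x‖₀ ≤ ‖x‖ ≤ C₀‖x‖₀ for all x, and h(y) ≥ M·h(x) for all x,y ∈ A∖{a₁} with ‖y−a₁‖₀ ≤ ‖x−a₁‖₀ (h is almost radial non-increasing on A w.r.t. a₁). Then for every n ≥ 2, e_r(a^{(n)},P) ≤ κ · ‖h‖_{L^{d/(d+r)}(λ_d)}^{1/r}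 · (n−1)^{−1/d}. -/
open MeasureTheory Metric
open scoped ENNReal NNReal

/-- The (topological) support of a measure. -/
def msupport {E : Type*} [TopologicalSpace E] [MeasurableSpace E]
    (P : MeasureTheory.Measure E) : Set E :=
  {x | ∀ U ∈ nhds x, 0 < P U}



private lemma unrpow {r x y : ℝ} (hr : 0 < r) (hx : 0 ≤ x) (hy : 0 ≤ y)
    (h : x ^ (1/r) ≤ y ^ (1/r)) : x ≤ y := by
  have h2 := Real.rpow_le_rpow (Real.rpow_nonneg hx _) h hr.le
  rwa [← Real.rpow_mul hx, ← Real.rpow_mul hy, one_div, inv_mul_cancel₀ hr.ne',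
    Real.rpow_one, Real.rpow_one] at h2

private lemma one_step {γ u v β : ℝ} (hγ : 0 < γ) (hu : 0 < u) (hv : 0 < v) (hβ : 0 < β)
    (h : v ≤ u - β * u ^ (1+γ)) : u ^ (-γ) + β * γ ≤ v ^ (-γ) := by
  set x := β * u ^ γ with hxdef
  have hx : 0 < x := mul_pos hβ (Real.rpow_pos_of_pos hu γ)
  have hu1γ : u ^ (1+γ) = u * u ^ γ := by
    rw [Real.rpow_add hu, Real.rpow_one]
  have hveq : v ≤ u * (1 - x) := by
    rw [hxdef]; nlinarith [hu1γ]
  have h1x : 0 < 1 - x := by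
    by_contra hcon
    push_neg at hcon
    nlinarith
  have hmono := Real.rpow_le_rpow_of_nonpos hv hveq (neg_nonpos.2 hγ.le)
  have hmul : (u * (1-x)) ^ (-γ) = u ^ (-γ) * (1-x) ^ (-γ) :=
    Real.mul_rpow hu.le h1x.le
  have hexp : 1 + γ * x ≤ (1-x) ^ (-γ) := by
    rw [Real.rpow_def_of_pos h1x]
    have hlog : Real.log (1-x) ≤ -x := by
      have := Real.log_le_sub_one_of_pos h1x
      linarith
    have harg : γ * x ≤ Real.log (1-x) * (-γ) := by nlinarith
    have := Real.add_one_le_exp (Real.log (1-x) * (-γ))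
    linarith
  have huneg : 0 < u ^ (-γ) := Real.rpow_pos_of_pos hu _
  have hxu : x * u ^ (-γ) = β := by
    rw [hxdef, mul_assoc, ← Real.rpow_add hu, add_neg_cancel, Real.rpow_zero, mul_one]
  have : u ^ (-γ) * (1 + γ * x) ≤ v ^ (-γ) := by
    calc u ^ (-γ) * (1 + γ * x) ≤ u ^ (-γ) * (1-x) ^ (-γ) := by nlinarith
    _ = (u * (1-x)) ^ (-γ) := hmul.symm
    _ ≤ v ^ (-γ) := hmono
  nlinarith

private lemma rec_aux {γ β : ℝ} (hγ : 0 < γ) (hβ : 0 < β) (u : ℕ → ℝ)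
    (hu : ∀ k, 1 ≤ k → 0 ≤ u k)
    (hstep : ∀ k, 1 ≤ k → β * u k ^ (1+γ) ≤ u k - u (k+1)) :
    ∀ n, 1 ≤ n → u n = 0 ∨ β * γ * ((n:ℝ)-1) ≤ u n ^ (-γ) := by
  have hzero : ∀ k, 1 ≤ k → u k = 0 → u (k+1) = 0 := by
    intro k hk h0
    have h1 := hstep k hk
    rw [h0, Real.zero_rpow (by positivity)] at h1
    have h2 := hu (k+1) (by omega)
    linarith
  intro n hn
  induction n with
  | zero => omega
  | succ m ih =>
    rcases Nat.lt_or_ge m 1 with hm | hm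
    · -- m = 0, n = 1
      have hm0 : m = 0 := by omega
      subst hm0
      rcases eq_or_lt_of_le (hu 1 le_rfl) with h0 | hpos
      · exact Or.inl h0.symm
      · right
        have : ((1:ℕ):ℝ) - 1 = 0 := by norm_num
        rw [this, mul_zero]
        exact (Real.rpow_pos_of_pos hpos _).le
    · rcases ih hm with h0 | hge
      · exact Or.inl (hzero m hm h0)
      · rcases eq_or_lt_of_le (hu m hm) with h0 | hposm
        · exact Or.inl (hzero m hm h0.symm)
        rcases eq_or_lt_of_le (hu (m+1) (by omega)) with h0 | hposm1
        · exact Or.inl h0.symm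
        · right
          have hos := one_step hγ hposm hposm1 hβ (by linarith [hstep m hm])
          have : ((m+1:ℕ):ℝ) - 1 = ((m:ℕ):ℝ) - 1 + 1 := by push_cast; ring
          rw [this]
          nlinarith

private lemma rec_bound {γ β : ℝ} (hγ : 0 < γ) (hβ : 0 < β) (u : ℕ → ℝ)
    (hu : ∀ k, 1 ≤ k → 0 ≤ u k)
    (hstep : ∀ k, 1 ≤ k → β * u k ^ (1+γ) ≤ u k - u (k+1)) :
    ∀ n, 2 ≤ n → u n ≤ (β*γ) ^ (-(1/γ)) * ((n:ℝ)-1) ^ (-(1/γ)) := by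
  intro n hn
  have hn1 : (1:ℝ) ≤ (n:ℝ) - 1 := by
    have : (2:ℝ) ≤ (n:ℝ) := by exact_mod_cast hn
    linarith
  rcases rec_aux hγ hβ u hu hstep n (by omega) with h0 | hge
  · rw [h0]
    positivity
  · have hun : 0 ≤ u n := hu n (by omega)
    rcases eq_or_lt_of_le hun with h0 | hpos
    · rw [← h0]; positivity
    have hlhs : 0 < β * γ * ((n:ℝ)-1) := by positivity
    have hmono := Real.rpow_le_rpow_of_nonpos hlhs hge (neg_nonpos.2 (by positivity : (0:ℝ) ≤ 1/γ))
    have heq : (u n ^ (-γ)) ^ (-(1/γ)) = u n := by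
      rw [← Real.rpow_mul hpos.le]
      have : -γ * -(1/γ) = 1 := by field_simp
      rw [this, Real.rpow_one]
    have heq2 : (β * γ * ((n:ℝ)-1)) ^ (-(1/γ)) = (β*γ) ^ (-(1/γ)) * ((n:ℝ)-1) ^ (-(1/γ)) :=
      Real.mul_rpow (by positivity) (by linarith)
    rw [← heq, ← heq2]
    exact hmono

private lemma holder_pt {d r b t T : ℝ} (hd : 0 < d) (hr : 0 < r)
    (hb : 0 ≤ b) (ht : 0 ≤ t) (hT : b * t ^ (d+r) ≤ T) :
    b * t ^ r ≤ T ^ (r/(d+r)) * b ^ (d/(d+r)) := by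
  have hdr : 0 < d + r := by linarith
  have hT0 : 0 ≤ T := le_trans (mul_nonneg hb (Real.rpow_nonneg ht _)) hT
  rcases eq_or_lt_of_le hb with h0 | hbpos
  · rw [← h0, zero_mul]
    exact mul_nonneg (Real.rpow_nonneg hT0 _) (Real.rpow_nonneg (by linarith) _)
  · have hkey : (b * t ^ (d+r)) ^ (r/(d+r)) * b ^ (d/(d+r)) = b * t ^ r := by
      rw [Real.mul_rpow hb (Real.rpow_nonneg ht _), ← Real.rpow_mul ht]
      have h1 : (d+r) * (r/(d+r)) = r := by field_simp
      rw [h1, mul_assoc, mul_comm (t ^ r), ← mul_assoc, ← Real.rpow_add hbpos]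
      have h2 : r/(d+r) + d/(d+r) = 1 := by field_simp; ring
      rw [h2, Real.rpow_one]
    rw [← hkey]
    exact mul_le_mul_of_nonneg_right
      (Real.rpow_le_rpow (mul_nonneg hb (Real.rpow_nonneg ht _)) hT (by positivity))
      (Real.rpow_nonneg hb _)

private lemma integrable_infDist_rpow {E : Type*} [NormedAddCommGroup E] [MeasurableSpace E]
    [OpensMeasurableSpace E] (P : Measure E) [IsFiniteMeasure P] {r : ℝ} (hr : 0 < r)
    (hmom : (∫⁻ x, (‖x‖₊ : ℝ≥0∞) ^ r ∂P) < ⊤) {Γ : Set E} {w : E} (hw : w ∈ Γ) :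
    Integrable (fun z => infDist z Γ ^ r) P := by
  have hnormmeas : Continuous (fun z : E => ‖z‖ ^ r) :=
    continuous_norm.rpow_const (fun z => Or.inr hr.le)
  have hnorm : Integrable (fun z : E => ‖z‖ ^ r) P := by
    refine ⟨hnormmeas.aestronglyMeasurable, ?_⟩
    rw [HasFiniteIntegral]
    have heq : ∀ z : E, (‖‖z‖ ^ r‖₊ : ℝ≥0∞) = (‖z‖₊ : ℝ≥0∞) ^ r := by
      intro z
      rw [← enorm_eq_nnnorm, ← ofReal_norm, ← enorm_eq_nnnorm, ← ofReal_norm,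
        Real.norm_of_nonneg (Real.rpow_nonneg (norm_nonneg z) r),
        ← ENNReal.ofReal_rpow_of_nonneg (norm_nonneg z) hr.le]
    calc ∫⁻ z, (‖‖z‖ ^ r‖₊ : ℝ≥0∞) ∂P = ∫⁻ z, (‖z‖₊ : ℝ≥0∞) ^ r ∂P :=
          lintegral_congr heq
      _ < ⊤ := hmom
  have hbound : ∀ z : E, ‖infDist z Γ ^ r‖ ≤ 2^r * ‖z‖^r + 2^r * ‖w‖^r := by
    intro z
    rw [Real.norm_of_nonneg (Real.rpow_nonneg infDist_nonneg r)]
    have h1 : infDist z Γ ≤ ‖z‖ + ‖w‖ :=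
      (infDist_le_dist_of_mem hw).trans (by rw [dist_eq_norm]; exact norm_sub_le z w)
    have h2 : infDist z Γ ^ r ≤ (‖z‖+‖w‖) ^ r :=
      Real.rpow_le_rpow infDist_nonneg h1 hr.le
    have h3 : (‖z‖+‖w‖) ^ r ≤ 2^r * ‖z‖^r + 2^r * ‖w‖^r := by
      rcases le_total ‖z‖ ‖w‖ with hc | hc
      · have hle : ‖z‖+‖w‖ ≤ 2*‖w‖ := by linarith
        have h4 := Real.rpow_le_rpow (by positivity) hle hr.le
        rw [Real.mul_rpow (by norm_num) (norm_nonneg w)] at h4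
        nlinarith [Real.rpow_nonneg (norm_nonneg z) r,
          Real.rpow_nonneg (show (0:ℝ) ≤ 2 by norm_num) r]
      · have hle : ‖z‖+‖w‖ ≤ 2*‖z‖ := by linarith
        have h4 := Real.rpow_le_rpow (by positivity) hle hr.le
        rw [Real.mul_rpow (by norm_num) (norm_nonneg z)] at h4
        nlinarith [Real.rpow_nonneg (norm_nonneg w) r,
          Real.rpow_nonneg (show (0:ℝ) ≤ 2 by norm_num) r]
    linarith
  exact ((hnorm.const_mul _).add (integrable_const _)).mono'
    (((continuous_infDist_pt Γ).rpow_const (fun z => Or.inr hr.le)).aestronglyMeasurable)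
    (ae_of_all _ hbound)

set_option maxHeartbeats 4000000 in
/-- Hybrid Zador–Pierce rate for greedy quantization: for every `d ≥ 1`, `r > 0`,
`M ∈ (0,1]`, `C₀ ∈ [1,∞)`, `p₀ > 0` (and Lebesgue/Haar measure `μ`) there is `κ ∈ (0,∞)`
such that if `P = h·μ` with `h ∈ L^{d/(d+r)}(μ)`, `P` has finite `r`-th moment,
`(a_n)` is an `L^r`-optimal greedy sequence for `P`, `A ⊇ supp P` is a Borel set containing
`a₁`, star-shaped w.r.t. `a₁`, with peakless constant `≥ p₀`, and `h` is almost radial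
non-increasing on `A` w.r.t. `a₁` (for a norm `N₀` which is `C₀`-equivalent to `‖·‖`, with
constant `M`), then `e_r(a^{(n)},P) ≤ κ ‖h‖_{L^{d/(d+r)}}^{1/r} (n−1)^{−1/d}` for all `n ≥ 2`. -/
theorem stmt_6 {E : Type*} [NormedAddCommGroup E] [NormedSpace ℝ E]
    [FiniteDimensional ℝ E] [MeasurableSpace E] [BorelSpace E]
    (d : ℕ) (hd : 1 ≤ d) (hdim : Module.finrank ℝ E = d)
    (μ : Measure E) [μ.IsAddHaarMeasure]
    (r : ℝ) (hr : 0 < r)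
    (M : ℝ) (hM : M ∈ Set.Ioc (0 : ℝ) 1)
    (C₀ : ℝ) (hC₀ : 1 ≤ C₀)
    (p₀ : ℝ) (hp₀ : 0 < p₀) :
    ∃ κ : ℝ, 0 < κ ∧
      ∀ (h : E → ℝ), Measurable h → (∀ x, 0 ≤ h x) →
      ∀ (P : Measure E), P = μ.withDensity (fun x => ENNReal.ofReal (h x)) →
        IsProbabilityMeasure P →
        Integrable (fun x => h x ^ ((d : ℝ) / ((d : ℝ) + r))) μ →
        (∫⁻ x, (‖x‖₊ : ℝ≥0∞) ^ r ∂P) < ⊤ →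
      ∀ a : ℕ → E, IsGreedy r P a →
      ∀ A : Set E, MeasurableSet A → msupport P ⊆ A → a 1 ∈ A →
        StarConvex ℝ (a 1) A →
        (∀ x ∈ A, ∀ t : ℝ, 0 < t → t ≤ ‖x - a 1‖ →
          p₀ * (μ (closedBall x t)).toReal ≤ (μ (closedBall x t ∩ A)).toReal) →
      ∀ N₀ : E → ℝ,
        (∀ x, N₀ x = 0 ↔ x = 0) →
        (∀ x y, N₀ (x + y) ≤ N₀ x + N₀ y) →
        (∀ (c : ℝ) (x : E), N₀ (c • x) = |c| * N₀ x) →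
        (∀ x, C₀⁻¹ * N₀ x ≤ ‖x‖ ∧ ‖x‖ ≤ C₀ * N₀ x) →
        (∀ x ∈ A \ {a 1}, ∀ y ∈ A \ {a 1},
          N₀ (y - a 1) ≤ N₀ (x - a 1) → M * h x ≤ h y) →
      ∀ n : ℕ, 2 ≤ n →
        qerr r P (aSet a n) ≤
          κ * ((∫ x, h x ^ ((d : ℝ) / ((d : ℝ) + r)) ∂μ) ^ (((d : ℝ) + r) / (d : ℝ))) ^ (1 / r)
            * ((n : ℝ) - 1) ^ (-(1 / (d : ℝ))) := by
  classical
  have hd0 : (0:ℝ) < (d:ℝ) := by exact_mod_cast Nat.lt_of_lt_of_le Nat.zero_lt_one hd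
  have hdr : (0:ℝ) < (d:ℝ) + r := by linarith
  have hM0 : 0 < M := hM.1
  have hC₀0 : (0:ℝ) < C₀ := lt_of_lt_of_le one_pos hC₀
  set V : ℝ := (μ (ball (0:E) 1)).toReal with hVdef
  have hV : 0 < V := ENNReal.toReal_pos (measure_ball_pos μ 0 one_pos).ne' measure_ball_lt_top.ne
  set cr : ℝ := (5/8:ℝ)^r - (1/8:ℝ)^r with hcrdef
  have hcr : 0 < cr := sub_pos.2 (Real.rpow_lt_rpow (by norm_num) (by norm_num) hr)
  have hpow8 : (0:ℝ) < (8*C₀^2)^d := by positivity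
  set c₁ : ℝ := cr * M * p₀ * V / (8*C₀^2)^d with hc₁def
  have hc₁ : 0 < c₁ := div_pos (mul_pos (mul_pos (mul_pos hcr hM0) hp₀) hV) hpow8
  set γ : ℝ := (d:ℝ)/r with hγdef
  have hγ : 0 < γ := div_pos hd0 hr
  refine ⟨(c₁*γ)^(-(1/(d:ℝ))), Real.rpow_pos_of_pos (mul_pos hc₁ hγ) _, ?_⟩
  intro h hmeas h0 P hP hprob hInt hmom a hgreedy A hA hsupp ha1A hstar hpeak
    N₀ hN0eq hNadd hNsmul hNequiv hrad
  haveI := hprob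
  set θ : ℝ := (d:ℝ)/((d:ℝ)+r) with hθdef
  set I : ℝ := ∫ x, h x ^ θ ∂μ with hIdef
  have hI0 : 0 ≤ I := integral_nonneg (fun x => Real.rpow_nonneg (h0 x) _)
  -- I > 0
  have hIpos : 0 < I := by
    rcases lt_or_eq_of_le hI0 with hpos | heq0
    · exact hpos
    · exfalso
      have hae : (fun x => h x ^ θ) =ᵐ[μ] 0 :=
        (integral_eq_zero_iff_of_nonneg (fun x => Real.rpow_nonneg (h0 x) _) hInt).1 heq0.symm
      have hzero : (fun x => ENNReal.ofReal (h x)) =ᵐ[μ] 0 := by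
        filter_upwards [hae] with x hx
        have hx0 : h x = 0 := by
          by_contra hc
          have : 0 < h x := lt_of_le_of_ne (h0 x) (Ne.symm hc)
          exact absurd hx (Real.rpow_pos_of_pos this θ).ne'
        simp [hx0]
      have hP0 : P = 0 := by
        rw [hP, withDensity_congr_ae hzero, withDensity_zero]
      have h1 : P Set.univ = 1 := hprob.measure_univ
      rw [hP0] at h1
      simp at h1
  -- P-a.e. support in A
  have hPA : P Aᶜ = 0 := by
    have hmsupp_null : P (msupport P)ᶜ = 0 := by
      obtain ⟨T, hTc, hTsub, hTeq⟩ :=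
        TopologicalSpace.isOpen_sUnion_countable {U : Set E | IsOpen U ∧ P U = 0}
          (fun s hs => hs.1)
      have hsub : (msupport P)ᶜ ⊆ ⋃₀ {U : Set E | IsOpen U ∧ P U = 0} := by
        intro x hx
        simp only [msupport, Set.mem_compl_iff, Set.mem_setOf_eq, not_forall] at hx
        obtain ⟨U, hU, hUp⟩ := hx
        have hU0 : P U = 0 := by
          have := le_of_not_gt hUp
          exact le_antisymm this (zero_le)
        obtain ⟨W, hWU, hWopen, hxW⟩ := _root_.mem_nhds_iff.1 hU
        exact ⟨W, ⟨hWopen, le_antisymm ((measure_mono hWU).trans hU0.le) (zero_le)⟩, hxW⟩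
      have h2 : P (⋃₀ {U : Set E | IsOpen U ∧ P U = 0}) = 0 := by
        rw [← hTeq]
        exact (measure_sUnion_null_iff hTc).2 (fun s hs => (hTsub hs).2)
      exact measure_mono_null hsub h2
    exact measure_mono_null (Set.compl_subset_compl.2 hsupp) hmsupp_null
  -- h vanishes a.e. off A
  have haeA : ∀ᵐ z ∂μ, z ∉ A → h z = 0 := by
    have h1 : ∫⁻ z in Aᶜ, ENNReal.ofReal (h z) ∂μ = 0 := by
      rw [← withDensity_apply _ hA.compl, ← hP]; exact hPA
    have h2 := (lintegral_eq_zero_iff (ENNReal.measurable_ofReal.comp hmeas)).1 h1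
    have h2' : ∀ᵐ z ∂μ.restrict Aᶜ, ENNReal.ofReal (h z) = 0 := by
      filter_upwards [h2] with z hz using hz
    have h3 := (ae_restrict_iff' hA.compl).1 h2'
    filter_upwards [h3] with z hz hzA
    have := hz hzA
    exact le_antisymm (ENNReal.ofReal_eq_zero.1 this) (h0 z)
  -- integral conversion
  have hconv : ∀ g : E → ℝ, ∫ x, g x ∂P = ∫ x, h x * g x ∂μ := by
    intro g
    rw [hP]
    have hfun : (fun x => ENNReal.ofReal (h x))
        = (fun x => ((fun y => (h y).toNNReal) x : ℝ≥0∞)) := by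
      funext x; simp [ENNReal.ofReal]
    rw [hfun, integral_withDensity_eq_integral_smul hmeas.real_toNNReal g]
    congr 1; funext x
    simp [NNReal.smul_def, Real.coe_toNNReal _ (h0 x)]
  -- integrability
  have hintP : ∀ (Γ : Set E) (w : E), w ∈ Γ → Integrable (fun z => infDist z Γ ^ r) P :=
    fun Γ w hw => integrable_infDist_rpow P hr hmom hw
  -- the distortion sequence
  set D : ℕ → ℝ := fun k => ∫ z, infDist z (aSet a k) ^ r ∂P with hDdef
  have hD0 : ∀ k, 0 ≤ D k := by
    intro k
    simp only [hDdef]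
    exact integral_nonneg (fun z => Real.rpow_nonneg infDist_nonneg r)
  have ha1S : ∀ k, 1 ≤ k → a 1 ∈ aSet a k :=
    fun k hk => ⟨1, Set.mem_Icc.mpr ⟨le_refl 1, hk⟩, rfl⟩
  have hgreedy' : ∀ (k : ℕ) (ξ : E),
      D (k+1) ≤ ∫ z, infDist z (insert ξ (aSet a k)) ^ r ∂P := by
    intro k ξ
    have hgg := hgreedy k ξ
    simp only [qerr] at hgg
    simp only [hDdef]
    exact unrpow hr (integral_nonneg (fun z => Real.rpow_nonneg infDist_nonneg r))
      (integral_nonneg (fun z => Real.rpow_nonneg infDist_nonneg r)) hgg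
  have hmono : ∀ k, 1 ≤ k → D (k+1) ≤ D k := by
    intro k hk
    have hthis := hgreedy' k (a 1)
    rw [Set.insert_eq_self.2 (ha1S k hk)] at hthis
    simpa only [hDdef] using hthis
  -- KEY micro-macro estimate
  have hkey : ∀ k, 1 ≤ k → ∀ x ∈ A,
      c₁ * (h x * infDist x (aSet a k) ^ ((d:ℝ)+r)) ≤ D k - D (k+1) := by
    intro k hk x hxA
    have ha1Γ : a 1 ∈ aSet a k := ha1S k hk
    have hΓne : (aSet a k).Nonempty := ⟨a 1, ha1Γ⟩
    set Dx : ℝ := infDist x (aSet a k) with hDxdef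
    have hDx0 : 0 ≤ Dx := infDist_nonneg
    rcases eq_or_lt_of_le hDx0 with hcase | hDpos
    · rw [← hcase, Real.zero_rpow hdr.ne', mul_zero, mul_zero]
      linarith [hmono k hk]
    -- main case : Dx > 0
    have hxne : x ≠ a 1 := by
      intro hxa
      have h1 : Dx ≤ dist x (a 1) := infDist_le_dist_of_mem ha1Γ
      rw [hxa, dist_self] at h1
      linarith
    set u : E := x - a 1 with hudef
    have hu0 : 0 < ‖u‖ := by
      rw [hudef, norm_pos_iff, sub_ne_zero]
      exact hxne
    have hDle : Dx ≤ ‖u‖ := by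
      have h1 : Dx ≤ dist x (a 1) := infDist_le_dist_of_mem ha1Γ
      rwa [dist_eq_norm] at h1
    set τ : ℝ := Dx / (4*‖u‖) with hτdef
    have hτpos : 0 < τ := by positivity
    have hτle : τ ≤ 1/4 := by
      rw [hτdef, div_le_iff₀ (by positivity)]
      linarith
    have hτu : τ * ‖u‖ = Dx/4 := by
      rw [hτdef]; field_simp
    set ξ : E := a 1 + (1-τ) • u with hξdef
    have hξA : ξ ∈ A := by
      have hmem := hstar hxA hτpos.le (by linarith : (0:ℝ) ≤ 1-τ) (by ring : τ + (1-τ) = 1)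
      have hξeq : ξ = τ • a 1 + (1-τ) • x := by
        rw [hξdef, hudef]; module
      rw [hξeq]; exact hmem
    have hξa1 : ξ - a 1 = (1-τ) • u := by rw [hξdef]; abel
    have hnξ : ‖ξ - a 1‖ = (1-τ)*‖u‖ := by
      rw [hξa1, norm_smul, Real.norm_eq_abs, abs_of_nonneg (by linarith)]
    set s : ℝ := Dx/(8*C₀^2) with hsdef
    have hC₀2 : (1:ℝ) ≤ C₀^2 := by nlinarith
    have hspos : 0 < s := by positivity
    have hsle : s ≤ Dx/8 := by
      rw [hsdef]
      exact div_le_div_of_nonneg_left hDpos.le (by norm_num) (by linarith)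
    have hsξ : s ≤ ‖ξ - a 1‖ := by
      rw [hnξ]
      have h1 : (3/4:ℝ)*‖u‖ ≤ (1-τ)*‖u‖ :=
        mul_le_mul_of_nonneg_right (by linarith) (norm_nonneg u)
      linarith
    have hpk := hpeak ξ hξA s hspos hsξ
    have hBmeas : MeasurableSet (closedBall ξ s ∩ A) := measurableSet_closedBall.inter hA
    have hxξ : x - ξ = τ • u := by
      rw [hξdef, hudef]; module
    have hdistxξ : dist x ξ = Dx/4 := by
      rw [dist_eq_norm, hxξ, norm_smul, Real.norm_eq_abs, abs_of_pos hτpos, hτu]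
    -- density lower bound on the small ball
    have hhB : ∀ z ∈ closedBall ξ s ∩ A, M * h x ≤ h z := by
      rintro z ⟨hzball, hzA⟩
      have hdzξ : dist z ξ ≤ s := mem_closedBall.1 hzball
      have hzne : z ≠ a 1 := by
        intro hz
        rw [hz] at hdzξ
        rw [dist_comm, dist_eq_norm, hnξ] at hdzξ
        have h1 : (3/4:ℝ)*‖u‖ ≤ (1-τ)*‖u‖ :=
          mul_le_mul_of_nonneg_right (by linarith) (norm_nonneg u)
        linarith
      apply hrad x ⟨hxA, hxne⟩ z ⟨hzA, hzne⟩
      -- N₀ (z - a 1) ≤ N₀ (x - a 1)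
      have hNadd1 : N₀ (z - a 1) ≤ N₀ (ξ - a 1) + N₀ (z - ξ) := by
        have hzdecomp : z - a 1 = (ξ - a 1) + (z - ξ) := by abel
        rw [hzdecomp]
        exact hNadd _ _
      have hNξ : N₀ (ξ - a 1) = (1-τ) * N₀ u := by
        rw [hξa1, hNsmul, abs_of_nonneg (by linarith)]
      have hNzξ : N₀ (z - ξ) ≤ C₀ * s := by
        have h1 : N₀ (z - ξ) ≤ C₀ * ‖z - ξ‖ := by
          have h2 := (hNequiv (z - ξ)).1
          rw [inv_mul_le_iff₀ hC₀0] at h2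
          exact h2
        have h3 : ‖z - ξ‖ ≤ s := by rwa [← dist_eq_norm]
        calc N₀ (z - ξ) ≤ C₀ * ‖z - ξ‖ := h1
          _ ≤ C₀ * s := mul_le_mul_of_nonneg_left h3 hC₀0.le
      have hNu_low : ‖u‖/C₀ ≤ N₀ u := by
        rw [div_le_iff₀ hC₀0]
        have := (hNequiv u).2
        linarith [mul_comm C₀ (N₀ u)]
      have h4 : Dx/(4*C₀) ≤ τ * N₀ u := by
        have step : τ * (‖u‖/C₀) ≤ τ * N₀ u := mul_le_mul_of_nonneg_left hNu_low hτpos.le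
        have heq : τ * (‖u‖/C₀) = Dx/(4*C₀) := by
          rw [hτdef]; field_simp
        linarith
      have hCs : C₀ * s = Dx/(8*C₀) := by
        rw [hsdef]; field_simp
      have h5 : Dx/(8*C₀) ≤ Dx/(4*C₀) := by
        apply div_le_div_of_nonneg_left hDpos.le (by positivity) (by linarith)
      have hNxu : N₀ (x - a 1) = N₀ u := by rw [hudef]
      rw [hNxu]
      linarith
    -- measure lower bound
    have hμBfin : μ (closedBall ξ s ∩ A) ≠ ⊤ :=
      ((measure_mono Set.inter_subset_left).trans_lt measure_closedBall_lt_top).ne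
    have hμBr : (μ (closedBall ξ s)).toReal = s^d * V := by
      rw [Measure.addHaar_closedBall μ ξ hspos.le, hdim, ENNReal.toReal_mul,
        ENNReal.toReal_ofReal (by positivity), hVdef]
    have hPBge : ENNReal.ofReal (M * h x) * μ (closedBall ξ s ∩ A)
        ≤ P (closedBall ξ s ∩ A) := by
      rw [hP, withDensity_apply _ hBmeas]
      calc ENNReal.ofReal (M * h x) * μ (closedBall ξ s ∩ A)
          = ∫⁻ z in closedBall ξ s ∩ A, ENNReal.ofReal (M * h x) ∂μ := by
            rw [setLIntegral_const]
        _ ≤ ∫⁻ z in closedBall ξ s ∩ A, ENNReal.ofReal (h z) ∂μ :=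
            setLIntegral_mono' hBmeas (fun z hz => ENNReal.ofReal_le_ofReal (hhB z hz))
    have hPBr : M * h x * (p₀ * (s^d * V)) ≤ (P (closedBall ξ s ∩ A)).toReal := by
      have t1 : (ENNReal.ofReal (M * h x) * μ (closedBall ξ s ∩ A)).toReal
          = M * h x * (μ (closedBall ξ s ∩ A)).toReal := by
        rw [ENNReal.toReal_mul, ENNReal.toReal_ofReal (mul_nonneg hM0.le (h0 x))]
      have t2 := ENNReal.toReal_mono (measure_ne_top P _) hPBge
      have t3 : p₀ * (s^d * V) ≤ (μ (closedBall ξ s ∩ A)).toReal := by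
        rw [← hμBr]; exact hpk
      calc M * h x * (p₀ * (s^d * V)) ≤ M * h x * (μ (closedBall ξ s ∩ A)).toReal := by
            exact mul_le_mul_of_nonneg_left t3 (mul_nonneg hM0.le (h0 x))
        _ = (ENNReal.ofReal (M * h x) * μ (closedBall ξ s ∩ A)).toReal := t1.symm
        _ ≤ _ := t2
    -- pointwise gain on the ball
    have hint1 : Integrable (fun z => infDist z (aSet a k) ^ r) P := hintP _ _ ha1Γ
    have hint2 : Integrable (fun z => infDist z (insert ξ (aSet a k)) ^ r) P :=
      hintP _ ξ (Set.mem_insert _ _)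
    have hsubd : ∀ z, infDist z (insert ξ (aSet a k)) ≤ infDist z (aSet a k) :=
      fun z => infDist_le_infDist_of_subset (Set.subset_insert _ _) hΓne
    have hptB : ∀ z ∈ closedBall ξ s ∩ A,
        cr * Dx ^ r ≤ infDist z (aSet a k) ^ r - infDist z (insert ξ (aSet a k)) ^ r := by
      rintro z ⟨hzball, _⟩
      have hdzξ : dist z ξ ≤ s := mem_closedBall.1 hzball
      have hnew : infDist z (insert ξ (aSet a k)) ^ r ≤ ((1/8)*Dx) ^ r := by
        apply Real.rpow_le_rpow infDist_nonneg _ hr.le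
        calc infDist z (insert ξ (aSet a k)) ≤ dist z ξ :=
              infDist_le_dist_of_mem (Set.mem_insert _ _)
          _ ≤ s := hdzξ
          _ ≤ (1/8)*Dx := by linarith
      have hdxz : dist x z ≤ Dx/4 + s := by
        calc dist x z ≤ dist x ξ + dist ξ z := dist_triangle x ξ z
          _ = Dx/4 + dist z ξ := by rw [hdistxξ, dist_comm]
          _ ≤ Dx/4 + s := by linarith
      have hold : (5/8)*Dx ≤ infDist z (aSet a k) := by
        have h1 : Dx ≤ infDist z (aSet a k) + dist x z := infDist_le_infDist_add_dist
        linarith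
      have holdr : ((5/8)*Dx) ^ r ≤ infDist z (aSet a k) ^ r :=
        Real.rpow_le_rpow (by positivity) hold hr.le
      have e1 : ((5/8)*Dx) ^ r = (5/8:ℝ)^r * Dx^r := Real.mul_rpow (by norm_num) hDx0
      have e2 : ((1/8)*Dx) ^ r = (1/8:ℝ)^r * Dx^r := Real.mul_rpow (by norm_num) hDx0
      rw [hcrdef]
      rw [e1] at holdr
      rw [e2] at hnew
      linarith
    -- integrate the gain
    have hgain : cr * Dx ^ r * (P (closedBall ξ s ∩ A)).toReal
        ≤ D k - ∫ z, infDist z (insert ξ (aSet a k)) ^ r ∂P := by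
      have hdiffnn : 0 ≤ᵐ[P] fun z =>
          infDist z (aSet a k) ^ r - infDist z (insert ξ (aSet a k)) ^ r :=
        Filter.Eventually.of_forall (fun z => sub_nonneg.2
          (Real.rpow_le_rpow infDist_nonneg (hsubd z) hr.le))
      have hintd : Integrable
          (fun z => infDist z (aSet a k) ^ r - infDist z (insert ξ (aSet a k)) ^ r) P :=
        hint1.sub hint2
      have hstep1 : cr * Dx ^ r * (P (closedBall ξ s ∩ A)).toReal
          = ∫ z in closedBall ξ s ∩ A, cr * Dx ^ r ∂P := by
        rw [setIntegral_const, smul_eq_mul, mul_comm]; rfl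
      rw [hstep1]
      calc ∫ z in closedBall ξ s ∩ A, cr * Dx ^ r ∂P
          ≤ ∫ z in closedBall ξ s ∩ A,
              (infDist z (aSet a k) ^ r - infDist z (insert ξ (aSet a k)) ^ r) ∂P :=
            setIntegral_mono_on
              (integrableOn_const (measure_lt_top P _).ne)
              hintd.integrableOn hBmeas hptB
        _ ≤ ∫ z, (infDist z (aSet a k) ^ r - infDist z (insert ξ (aSet a k)) ^ r) ∂P :=
            setIntegral_le_integral hintd hdiffnn
        _ = D k - ∫ z, infDist z (insert ξ (aSet a k)) ^ r ∂P := by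
            rw [integral_sub hint1 hint2]
    -- assemble
    have hDrw : Dx ^ ((d:ℝ)+r) = Dx ^ d * Dx ^ r := by
      rw [Real.rpow_add hDpos, Real.rpow_natCast]
    have hsd : s ^ d = Dx ^ d / (8*C₀^2)^d := by rw [hsdef, div_pow]
    have hfinal : c₁ * (h x * Dx ^ ((d:ℝ)+r))
        ≤ cr * Dx ^ r * (P (closedBall ξ s ∩ A)).toReal := by
      have hmul := mul_le_mul_of_nonneg_left hPBr
        (by positivity : (0:ℝ) ≤ cr * Dx ^ r)
      have heq : cr * Dx ^ r * (M * h x * (p₀ * (s^d * V)))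
          = c₁ * (h x * Dx ^ ((d:ℝ)+r)) := by
        rw [hDrw, hsd, hc₁def]
        field_simp
      linarith
    have hgr := hgreedy' k ξ
    linarith [hgain, hgr, hfinal]
  -- Hoelder step: one-step recursive inequality
  have hstep : ∀ k, 1 ≤ k → (c₁ * I^(-(1+γ))) * (D k)^(1+γ) ≤ D k - D (k+1) := by
    intro k hk
    have hg0 : 0 ≤ D k - D (k+1) := sub_nonneg.2 (hmono k hk)
    set T : ℝ := (D k - D (k+1))/c₁ with hTdef
    have hT0 : 0 ≤ T := div_nonneg hg0 hc₁.le
    have hae : ∀ᵐ z ∂μ, h z * infDist z (aSet a k) ^ r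
        ≤ T^(r/((d:ℝ)+r)) * h z ^ θ := by
      filter_upwards [haeA] with z hz
      by_cases hzA : z ∈ A
      · have hk2 := hkey k hk z hzA
        have hTz : h z * infDist z (aSet a k) ^ ((d:ℝ)+r) ≤ T := by
          rw [hTdef, le_div_iff₀ hc₁]
          linarith
        have hout := holder_pt hd0 hr (h0 z) infDist_nonneg hTz
        rw [hθdef]
        exact hout
      · rw [hz hzA, zero_mul, Real.zero_rpow, mul_zero]
        rw [hθdef]
        positivity
    have hDk : D k = ∫ z, h z * infDist z (aSet a k) ^ r ∂μ := by
      simp only [hDdef]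
      exact hconv _
    have hRint : Integrable (fun z => T^(r/((d:ℝ)+r)) * h z ^ θ) μ := hInt.const_mul _
    have hLmeas : AEStronglyMeasurable (fun z => h z * infDist z (aSet a k) ^ r) μ :=
      (hmeas.mul (((continuous_infDist_pt (aSet a k)).rpow_const
        (fun z => Or.inr hr.le)).measurable)).aestronglyMeasurable
    have hLint : Integrable (fun z => h z * infDist z (aSet a k) ^ r) μ := by
      apply hRint.mono' hLmeas
      filter_upwards [hae] with z hz
      rw [Real.norm_of_nonneg (mul_nonneg (h0 z) (Real.rpow_nonneg infDist_nonneg r))]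
      exact hz
    have hDle : D k ≤ T^(r/((d:ℝ)+r)) * I := by
      rw [hDk]
      calc ∫ z, h z * infDist z (aSet a k) ^ r ∂μ
          ≤ ∫ z, T^(r/((d:ℝ)+r)) * h z ^ θ ∂μ := integral_mono_ae hLint hRint hae
        _ = T^(r/((d:ℝ)+r)) * I := by
            rw [integral_const_mul, hIdef]
    have h1ρ : (r/((d:ℝ)+r)) * (1+γ) = 1 := by
      rw [hγdef]; field_simp; ring
    have hdiv : D k / I ≤ T^(r/((d:ℝ)+r)) := (div_le_iff₀ hIpos).2 hDle
    have h2 : (D k / I)^(1+γ) ≤ T := by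
      have h21 := Real.rpow_le_rpow (div_nonneg (hD0 k) hIpos.le) hdiv
        (by positivity : (0:ℝ) ≤ 1+γ)
      rwa [← Real.rpow_mul hT0, h1ρ, Real.rpow_one] at h21
    have h3 : (D k / I)^(1+γ) = (D k)^(1+γ) * I^(-(1+γ)) := by
      rw [Real.div_rpow (hD0 k) hIpos.le, Real.rpow_neg hIpos.le, div_eq_mul_inv]
    rw [h3] at h2
    have h4 : c₁ * ((D k)^(1+γ) * I^(-(1+γ))) ≤ c₁ * T :=
      mul_le_mul_of_nonneg_left h2 hc₁.le
    have h5 : c₁ * T = D k - D (k+1) := by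
      rw [hTdef, mul_div_cancel₀ _ hc₁.ne']
    have h6 : (c₁ * I^(-(1+γ))) * (D k)^(1+γ) = c₁ * ((D k)^(1+γ) * I^(-(1+γ))) := by ring
    linarith
  -- recursion
  intro n hn
  have hn1 : (1:ℝ) ≤ (n:ℝ) - 1 := by
    have h1 : (2:ℝ) ≤ (n:ℝ) := by exact_mod_cast hn
    linarith
  have hβ : 0 < c₁ * I^(-(1+γ)) := mul_pos hc₁ (Real.rpow_pos_of_pos hIpos _)
  have hrec := rec_bound hγ hβ D (fun k _ => hD0 k) hstep n hn
  have hre : c₁ * I^(-(1+γ)) * γ = (c₁*γ)*I^(-(1+γ)) := by ring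
  rw [hre] at hrec
  have hq : qerr r P (aSet a n) = (D n)^(1/r) := by
    simp only [qerr, hDdef]
  rw [hq]
  have hIe : (0:ℝ) ≤ I^(-(1+γ)) := (Real.rpow_pos_of_pos hIpos _).le
  have hcγ : (0:ℝ) ≤ c₁*γ := (mul_pos hc₁ hγ).le
  have hbase : (0:ℝ) ≤ (c₁*γ)*I^(-(1+γ)) := mul_nonneg hcγ hIe
  have hn0 : (0:ℝ) ≤ (n:ℝ)-1 := by linarith
  have hfin := Real.rpow_le_rpow (hD0 n) hrec (by positivity : (0:ℝ) ≤ 1/r)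
  refine le_trans hfin (le_of_eq ?_)
  rw [Real.mul_rpow (Real.rpow_nonneg hbase _) (Real.rpow_nonneg hn0 _),
    ← Real.rpow_mul hbase, ← Real.rpow_mul hn0,
    Real.mul_rpow hcγ hIe, ← Real.rpow_mul hIpos.le,
    show (I ^ (((d:ℝ)+r)/(d:ℝ)))^(1/r) = I ^ ((((d:ℝ)+r)/(d:ℝ))*(1/r)) from
      (Real.rpow_mul hIpos.le _ _).symm,
    show (-(1/γ)) * (1/r) = -(1/(d:ℝ)) from by
      rw [hγdef]; field_simp,
    show (-(1+γ)) * -(1/(d:ℝ)) = (((d:ℝ)+r)/(d:ℝ))*(1/r) from by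
      rw [hγdef]; field_simp; ring]
end

section
/- Let ν = f·λ_d be a Borel probability measure on ℝ^d, let A be a Borel subset of ℝ^d that is star-shaped with respect to a point a₁ ∈ A, and assume the peakless constant p(A) := inf{ λ_d(B(x,t)∩A)/λ_d(B(x,t)) : x ∈ A, 0 < t ≤ ‖x−a₁‖ } is positive. Assume there exist a norm ‖·‖₀ on ℝ^d, a constant M ∈ (0,1], and C₀ ∈ [1,∞) with C₀^{−1}‖x‖₀ ≤ ‖x‖ ≤ C₀‖x‖₀ for all x, such that f(y) ≥ M·f(x) for all x,y ∈ A∖{a₁} with ‖y−a₁‖₀ ≤ ‖x−a₁‖₀. Then for every x ∈ A and every t ∈ (0, ‖x−a₁‖], ν(B(x,t)) ≥ M · p(A) · (2C₀²)^{−d} · V_d · f(x) · t^d. -/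
open MeasureTheory Metric
open scoped ENNReal NNReal

set_option maxHeartbeats 1000000

/-- Lower bound on the `ν`-measure of balls for `ν = f·λ_d`, where `f` is almost radial
non-increasing on a star-shaped, peakless set `A` with respect to `a₁` (Lemma 2.10):
for `x ∈ A` and `0 < t ≤ ‖x−a₁‖`,
`ν(B(x,t)) ≥ M · p(A) · (2C₀²)^{−d} · V_d · f(x) · t^d`. -/
theorem stmt_7 {E : Type*} [NormedAddCommGroup E] [NormedSpace ℝ E]
    [FiniteDimensional ℝ E] [MeasurableSpace E] [BorelSpace E]
    (d : ℕ) (hd : 1 ≤ d) (hdim : Module.finrank ℝ E = d)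
    (μ : Measure E) [μ.IsAddHaarMeasure]
    (f : E → ℝ) (hfm : Measurable f) (hf0 : ∀ x, 0 ≤ f x)
    (ν : Measure E) (hν : ν = μ.withDensity fun x => ENNReal.ofReal (f x))
    [IsProbabilityMeasure ν]
    (A : Set E) (hA : MeasurableSet A)
    (a₁ : E) (ha₁ : a₁ ∈ A) (hstar : StarConvex ℝ a₁ A)
    (pA : ℝ)
    (hpA : pA = sInf {z : ℝ | ∃ x ∈ A, ∃ t : ℝ, 0 < t ∧ t ≤ ‖x - a₁‖ ∧
        z = (μ (closedBall x t ∩ A)).toReal / (μ (closedBall x t)).toReal})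
    (hpApos : 0 < pA)
    (N₀ : E → ℝ)
    (hN₀def : ∀ x, N₀ x = 0 ↔ x = 0)
    (hN₀tri : ∀ x y, N₀ (x + y) ≤ N₀ x + N₀ y)
    (hN₀hom : ∀ (c : ℝ) (x : E), N₀ (c • x) = |c| * N₀ x)
    (M : ℝ) (hM : M ∈ Set.Ioc (0 : ℝ) 1)
    (C₀ : ℝ) (hC₀ : 1 ≤ C₀)
    (hequiv : ∀ x, C₀⁻¹ * N₀ x ≤ ‖x‖ ∧ ‖x‖ ≤ C₀ * N₀ x)
    (hrad : ∀ x ∈ A \ {a₁}, ∀ y ∈ A \ {a₁},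
      N₀ (y - a₁) ≤ N₀ (x - a₁) → M * f x ≤ f y) :
    ∀ x ∈ A, ∀ t : ℝ, 0 < t → t ≤ ‖x - a₁‖ →
      M * pA * ((2 * C₀ ^ 2) ^ d)⁻¹ * (μ (closedBall 0 1)).toReal * f x * t ^ d
        ≤ (ν (closedBall x t)).toReal := by
  intro x hx t ht htle
  have hC₀pos : (0:ℝ) < C₀ := lt_of_lt_of_le one_pos hC₀
  have hr : (0:ℝ) < ‖x - a₁‖ := lt_of_lt_of_le ht htle
  set r := ‖x - a₁‖ with hrdef
  have hxne : x ≠ a₁ := by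
    intro h
    rw [hrdef, h] at hr
    simp at hr
  set θ : ℝ := 1 - t / (2 * r) with hθdef
  have htr : t / (2 * r) ≤ 1/2 := by
    rw [div_le_div_iff₀ (by positivity) (by norm_num)]
    nlinarith
  have htrpos : 0 < t / (2 * r) := by positivity
  have hθ0 : 0 ≤ θ := by rw [hθdef]; linarith
  have hθ1 : θ ≤ 1 := by rw [hθdef]; linarith
  set x' : E := a₁ + θ • (x - a₁) with hx'def
  have hx'sub : x' - a₁ = θ • (x - a₁) := by rw [hx'def]; abel
  have hx'A : x' ∈ A := by
    have h := hstar hx (a := 1 - θ) (b := θ) (by linarith) hθ0 (by ring)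
    have heq : (1 - θ) • a₁ + θ • x = x' := by rw [hx'def]; module
    rwa [heq] at h
  set s : ℝ := t / (2 * C₀^2) with hsdef
  have hs : 0 < s := by positivity
  have hnormx' : ‖x' - a₁‖ = θ * r := by
    rw [hx'sub, norm_smul, Real.norm_eq_abs, abs_of_nonneg hθ0]
  have hθr : θ * r = r - t/2 := by
    rw [hθdef]; field_simp
  have hst2 : s ≤ t/2 := by
    rw [hsdef, div_le_div_iff₀ (by positivity) (by norm_num)]
    nlinarith [sq_nonneg (C₀ - 1)]
  have hsle : s ≤ ‖x' - a₁‖ := by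
    rw [hnormx', hθr]; linarith
  clear_value r θ x' s
  have hsub : closedBall x' s ⊆ closedBall x t := by
    intro y hy
    rw [mem_closedBall, dist_eq_norm] at hy ⊢
    have h1 : x' - x = (θ - 1) • (x - a₁) := by rw [hx'def]; module
    have h2 : ‖x' - x‖ = (1 - θ) * r := by
      rw [h1, norm_smul, Real.norm_eq_abs, abs_of_nonpos (by linarith), ← hrdef]
      ring
    have h3 : (1 - θ) * r = t/2 := by nlinarith [hθr]
    have h4 : y - x = (y - x') + (x' - x) := by abel
    calc ‖y - x‖ ≤ ‖y - x'‖ + ‖x' - x‖ := by rw [h4]; exact norm_add_le _ _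
      _ ≤ s + t/2 := by rw [h2, h3]; linarith
      _ ≤ t := by linarith
  have hN₀nonneg : ∀ z : E, 0 ≤ N₀ z := by
    intro z
    have h := (hequiv z).2
    nlinarith [norm_nonneg z]
  -- key2 : f is bounded below on the small ball intersected with A
  have key2 : ∀ y ∈ closedBall x' s ∩ A, y ≠ a₁ → M * f x ≤ f y := by
    intro y hy hyne
    apply hrad x ⟨hx, hxne⟩ y ⟨hy.2, hyne⟩
    have h1 : N₀ (y - a₁) ≤ N₀ (y - x') + N₀ (x' - a₁) := by
      have heq : y - a₁ = (y - x') + (x' - a₁) := by abel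
      rw [heq]; exact hN₀tri _ _
    have hyx : ‖y - x'‖ ≤ s := by
      have := hy.1
      rwa [mem_closedBall, dist_eq_norm] at this
    have h2 : N₀ (y - x') ≤ C₀ * s := by
      have h := (hequiv (y - x')).1
      have h' : C₀⁻¹ * N₀ (y - x') ≤ s := h.trans hyx
      have h'' := mul_le_mul_of_nonneg_left h' hC₀pos.le
      rwa [← mul_assoc, mul_inv_cancel₀ hC₀pos.ne', one_mul] at h''
    have h3 : N₀ (x' - a₁) = θ * N₀ (x - a₁) := by
      rw [hx'sub, hN₀hom, abs_of_nonneg hθ0]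
    have h4 : r / C₀ ≤ N₀ (x - a₁) := by
      have h := (hequiv (x - a₁)).2
      rw [div_le_iff₀ hC₀pos]
      calc r = ‖x - a₁‖ := hrdef
        _ ≤ C₀ * N₀ (x - a₁) := h
        _ = N₀ (x - a₁) * C₀ := mul_comm _ _
    have h5 : C₀ * s = t / (2 * C₀) := by
      rw [hsdef]; field_simp
    have h6 : t / (2 * C₀) ≤ (1 - θ) * N₀ (x - a₁) := by
      have h1θ : 1 - θ = t / (2*r) := by rw [hθdef]; ring
      rw [h1θ]
      calc t/(2*C₀) = (t/(2*r)) * (r/C₀) := by field_simp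
        _ ≤ (t/(2*r)) * N₀ (x - a₁) :=
            mul_le_mul_of_nonneg_left h4 (le_of_lt htrpos)
    have h7 : θ * N₀ (x - a₁) + (1 - θ) * N₀ (x - a₁) = N₀ (x - a₁) := by ring
    linarith [h1, h2, h3, h5, h6, h7]
  -- measure-theoretic part
  have hTmeas : MeasurableSet (closedBall x' s ∩ A) := measurableSet_closedBall.inter hA
  have hB'fin : μ (closedBall x' s) ≠ ⊤ := measure_closedBall_lt_top.ne
  have hB'pos : 0 < μ (closedBall x' s) := measure_closedBall_pos μ x' hs
  have hBdd : BddBelow {z : ℝ | ∃ x ∈ A, ∃ t : ℝ, 0 < t ∧ t ≤ ‖x - a₁‖ ∧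
      z = (μ (closedBall x t ∩ A)).toReal / (μ (closedBall x t)).toReal} := by
    refine ⟨0, ?_⟩
    rintro z ⟨w, hw, u, hu, hule, rfl⟩
    positivity
  have hmem : (μ (closedBall x' s ∩ A)).toReal / (μ (closedBall x' s)).toReal ∈
      {z : ℝ | ∃ x ∈ A, ∃ t : ℝ, 0 < t ∧ t ≤ ‖x - a₁‖ ∧
      z = (μ (closedBall x t ∩ A)).toReal / (μ (closedBall x t)).toReal} :=
    ⟨x', hx'A, s, hs, hsle, rfl⟩
  have hple : pA ≤ (μ (closedBall x' s ∩ A)).toReal / (μ (closedBall x' s)).toReal := by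
    rw [hpA]; exact csInf_le hBdd hmem
  have hB'r : 0 < (μ (closedBall x' s)).toReal := ENNReal.toReal_pos hB'pos.ne' hB'fin
  have key1 : pA * (μ (closedBall x' s)).toReal ≤ (μ (closedBall x' s ∩ A)).toReal := by
    have h := mul_le_mul_of_nonneg_right hple hB'r.le
    rwa [div_mul_cancel₀ _ hB'r.ne'] at h
  have hμTfin : μ (closedBall x' s ∩ A) ≠ ⊤ :=
    ne_top_of_le_ne_top hB'fin (measure_mono Set.inter_subset_left)
  haveI : Nontrivial E :=
    Module.nontrivial_of_finrank_pos (R := ℝ) (by rw [hdim]; omega)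
  have hsing : μ {a₁} = 0 := measure_singleton a₁
  have hane : ∀ᵐ y ∂μ, y ≠ a₁ := by
    rw [ae_iff]
    simpa using hsing
  have hνT : ENNReal.ofReal (M * f x) * μ (closedBall x' s ∩ A) ≤ ν (closedBall x' s ∩ A) := by
    rw [hν, withDensity_apply _ hTmeas, ← setLIntegral_const]
    apply setLIntegral_mono_ae (hfm.ennreal_ofReal.aemeasurable)
    filter_upwards [hane] with y hy hyT
    exact ENNReal.ofReal_le_ofReal (key2 y hyT hy)
  have hMf : 0 ≤ M * f x := mul_nonneg hM.1.le (hf0 x)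
  have step1 : M * f x * (μ (closedBall x' s ∩ A)).toReal ≤ (ν (closedBall x' s ∩ A)).toReal := by
    have h := ENNReal.toReal_mono (measure_ne_top ν _) hνT
    rwa [ENNReal.toReal_mul, ENNReal.toReal_ofReal hMf] at h
  have step2 : (ν (closedBall x' s ∩ A)).toReal ≤ (ν (closedBall x t)).toReal :=
    ENNReal.toReal_mono (measure_ne_top ν _)
      (measure_mono (Set.inter_subset_left.trans hsub))
  have hvol : (μ (closedBall x' s)).toReal = s ^ d * (μ (closedBall (0:E) 1)).toReal := by
    rw [Measure.addHaar_closedBall' μ x' hs.le, hdim, ENNReal.toReal_mul,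
      ENNReal.toReal_ofReal (by positivity)]
  have hVnn : 0 ≤ (μ (closedBall (0:E) 1)).toReal := ENNReal.toReal_nonneg
  calc M * pA * ((2 * C₀ ^ 2) ^ d)⁻¹ * (μ (closedBall (0:E) 1)).toReal * f x * t ^ d
      = M * f x * (pA * (s ^ d * (μ (closedBall (0:E) 1)).toReal)) := by
        rw [hsdef, div_pow, div_eq_mul_inv]; ring
    _ ≤ M * f x * (μ (closedBall x' s ∩ A)).toReal := by
        apply mul_le_mul_of_nonneg_left _ hMf
        rw [← hvol]; exact key1
    _ ≤ (ν (closedBall x' s ∩ A)).toReal := step1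
    _ ≤ (ν (closedBall x t)).toReal := step2
end

section
/- Let r ∈ [1,∞), let μ₁,…,μ_d be Borel probability measures on ℝ, and for each k let Γ_k ⊂ ℝ be a nonempty finite set. Equip ℝ^d with the ℓ^r-norm ‖x‖_r = (Σ_{k=1}^d |x_k|^r)^{1/r} and let μ = μ₁ ⊗ … ⊗ μ_d be the product measure on ℝ^d. Then the L^r-quantization error of the product grid Γ₁ × … × Γ_d satisfies e_r(Γ₁ × … × Γ_d, μ)^r = Σ_{k=1}^d e_r(Γ_k, μ_k)^r. -/
open MeasureTheory Metric
open scoped ENNReal NNReal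

lemma key_pointwise (d : ℕ) (r : ℝ) (hr : 1 ≤ r)
    (Γ : Fin d → Finset ℝ) (hΓ : ∀ k, (Γ k).Nonempty) (x : Fin d → ℝ) :
    (sInf ((fun a : Fin d → ℝ => (∑ k, |x k - a k| ^ r) ^ (1 / r)) ''
          Set.univ.pi fun k => ((Γ k : Set ℝ))) ^ r)
      = ∑ k, infDist (x k) (Γ k : Set ℝ) ^ r := by
  have hr0 : (0:ℝ) < r := lt_of_lt_of_le one_pos hr
  have hrne : r ≠ 0 := ne_of_gt hr0
  set g : (Fin d → ℝ) → ℝ := fun a => (∑ k, |x k - a k| ^ r) ^ (1 / r) with hg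
  set P : Set (Fin d → ℝ) := Set.univ.pi fun k => ((Γ k : Set ℝ)) with hP
  have hPne : P.Nonempty := ⟨fun k => (hΓ k).choose, fun k _ => (hΓ k).choose_spec⟩
  have hSne : (g '' P).Nonempty := hPne.image g
  have hsum_nonneg : ∀ a : Fin d → ℝ, 0 ≤ ∑ k, |x k - a k| ^ r := fun a =>
    Finset.sum_nonneg fun k _ => Real.rpow_nonneg (abs_nonneg _) r
  have hSbdd : BddBelow (g '' P) := by
    refine ⟨0, fun s hs => ?_⟩
    obtain ⟨a, _, rfl⟩ := hs
    exact Real.rpow_nonneg (hsum_nonneg a) _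
  have hid_nonneg : ∀ k, 0 ≤ infDist (x k) (Γ k : Set ℝ) := fun k => infDist_nonneg
  have hSig_nonneg : (0:ℝ) ≤ ∑ k, infDist (x k) (Γ k : Set ℝ) ^ r :=
    Finset.sum_nonneg fun k _ => Real.rpow_nonneg (hid_nonneg k) r
  have hsInf_nonneg : 0 ≤ sInf (g '' P) := by
    refine le_csInf hSne fun s hs => ?_
    obtain ⟨a, _, rfl⟩ := hs
    exact Real.rpow_nonneg (hsum_nonneg a) _
  have hinvr : ∀ t : ℝ, 0 ≤ t → (t ^ (1/r)) ^ r = t := by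
    intro t ht
    rw [one_div, Real.rpow_inv_rpow ht hrne]
  have hbest : ∀ k, ∃ b ∈ (Γ k : Set ℝ), infDist (x k) (Γ k : Set ℝ) = dist (x k) b := fun k =>
    ((Γ k).finite_toSet.isCompact).exists_infDist_eq_dist (by exact_mod_cast hΓ k) (x k)
  choose b hb hdist using hbest
  apply le_antisymm
  · have hmem : g b ∈ g '' P := ⟨b, fun k _ => hb k, rfl⟩
    have h1 : sInf (g '' P) ≤ g b := csInf_le hSbdd hmem
    have h2 : sInf (g '' P) ^ r ≤ g b ^ r :=
      Real.rpow_le_rpow hsInf_nonneg h1 (le_of_lt hr0)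
    have h3 : g b ^ r = ∑ k, infDist (x k) (Γ k : Set ℝ) ^ r := by
      rw [hg]
      simp only
      rw [hinvr _ (hsum_nonneg b)]
      refine Finset.sum_congr rfl fun k _ => ?_
      rw [hdist k, Real.dist_eq]
    rw [← h3]; exact h2
  · -- Σ ≤ sInf ^ r
    have hlb : (∑ k, infDist (x k) (Γ k : Set ℝ) ^ r) ^ (1/r) ≤ sInf (g '' P) := by
      refine le_csInf hSne fun s hs => ?_
      obtain ⟨a, ha, rfl⟩ := hs
      refine Real.rpow_le_rpow hSig_nonneg ?_ (by positivity)
      refine Finset.sum_le_sum fun k _ => ?_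
      refine Real.rpow_le_rpow (hid_nonneg k) ?_ (le_of_lt hr0)
      have : a k ∈ (Γ k : Set ℝ) := ha k (Set.mem_univ k)
      calc infDist (x k) (Γ k : Set ℝ) ≤ dist (x k) (a k) := infDist_le_dist_of_mem this
        _ = |x k - a k| := Real.dist_eq _ _
    calc ∑ k, infDist (x k) (Γ k : Set ℝ) ^ r
        = ((∑ k, infDist (x k) (Γ k : Set ℝ) ^ r) ^ (1/r)) ^ r := (hinvr _ hSig_nonneg).symm
      _ ≤ sInf (g '' P) ^ r := Real.rpow_le_rpow (by positivity) hlb (le_of_lt hr0)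

lemma map_eval_pi' (d : ℕ) (μ : Fin d → Measure ℝ) [∀ k, IsProbabilityMeasure (μ k)]
    (k : Fin d) : (Measure.pi μ).map (Function.eval k) = μ k := by
  ext s hs
  rw [Measure.map_apply (measurable_pi_apply k) hs]
  have hpre : Function.eval k ⁻¹' s
      = Set.pi Set.univ (Function.update (fun _ : Fin d => (Set.univ : Set ℝ)) k s) := by
    ext y
    simp only [Set.mem_preimage, Set.mem_pi, Set.mem_univ, forall_true_left,
      Function.update_apply, Function.eval]
    constructor
    · intro h i; split <;> simp_all
    · intro h; have := h k; simp at this; exact this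
  rw [hpre, Measure.pi_pi]
  rw [Finset.prod_eq_single k]
  · simp
  · intro i _ hik; simp [Function.update_apply, hik]
  · simp

/-- Product quantization identity (ℓ^r norm on ℝ^d, product grid, product measure):
`e_r(Γ₁ × … × Γ_d, μ₁ ⊗ … ⊗ μ_d)^r = Σ_k e_r(Γ_k, μ_k)^r`, stated with distortions
(i.e. `r`-th powers of quantization errors) computed as lower integrals in `[0,∞]`.
Here `d(x, Γ₁×…×Γ_d) = min_{a ∈ Γ₁×…×Γ_d} (Σ_k |x_k − a_k|^r)^{1/r}` is the distance for the
ℓ^r-norm, and on `ℝ`, `d(t,Γ_k) = min_{b ∈ Γ_k} |t − b|` is `Metric.infDist`. -/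
theorem stmt_12 (d : ℕ) (hd : 1 ≤ d) (r : ℝ) (hr : 1 ≤ r)
    (μ : Fin d → Measure ℝ) [∀ k, IsProbabilityMeasure (μ k)]
    (Γ : Fin d → Finset ℝ) (hΓ : ∀ k, (Γ k).Nonempty) :
    (∫⁻ x, ENNReal.ofReal
        (sInf ((fun a : Fin d → ℝ => (∑ k, |x k - a k| ^ r) ^ (1 / r)) ''
          Set.univ.pi fun k => ((Γ k : Set ℝ))) ^ r) ∂(Measure.pi μ))
      = ∑ k, ∫⁻ t, ENNReal.ofReal (infDist t (Γ k : Set ℝ) ^ r) ∂(μ k) := by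
  have hmeas : ∀ k : Fin d, Measurable (fun t : ℝ => ENNReal.ofReal (infDist t (Γ k : Set ℝ) ^ r)) := by
    intro k
    exact ENNReal.measurable_ofReal.comp
      (((continuous_infDist_pt (Γ k : Set ℝ)).rpow_const
        fun t => Or.inr (le_trans zero_le_one hr)).measurable)
  calc (∫⁻ x, ENNReal.ofReal
        (sInf ((fun a : Fin d → ℝ => (∑ k, |x k - a k| ^ r) ^ (1 / r)) ''
          Set.univ.pi fun k => ((Γ k : Set ℝ))) ^ r) ∂(Measure.pi μ))
      = ∫⁻ x, ∑ k, ENNReal.ofReal (infDist (x k) (Γ k : Set ℝ) ^ r) ∂(Measure.pi μ) := by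
        refine lintegral_congr fun x => ?_
        rw [key_pointwise d r hr Γ hΓ x,
          ENNReal.ofReal_sum_of_nonneg fun k _ => Real.rpow_nonneg infDist_nonneg r]
    _ = ∑ k, ∫⁻ x, ENNReal.ofReal (infDist (x k) (Γ k : Set ℝ) ^ r) ∂(Measure.pi μ) := by
        exact lintegral_finset_sum _ fun k _ => (hmeas k).comp (measurable_pi_apply k)
    _ = ∑ k, ∫⁻ t, ENNReal.ofReal (infDist t (Γ k : Set ℝ) ^ r) ∂(μ k) := by
        refine Finset.sum_congr rfl fun k _ => ?_
        rw [← map_eval_pi' d μ k, lintegral_map (hmeas k) (measurable_pi_apply k)]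
end

section
/- Let X be an ℝ^d-valued random vector (ℝ^d with the Euclidean inner product) with E‖X‖² < ∞, and let X̂ = q(X) where q : ℝ^d → ℝ^d is a Borel function taking finitely many values. Let ρ ∈ [0,1] and let f : ℝ^d → ℝ be differentiable with ρ-Hölder gradient: ‖∇f(x) − ∇f(y)‖ ≤ [∇f]_ρ ‖x−y‖^ρ for all x,y, where [∇f]_ρ < ∞. Assume f(X), f(X̂) are integrable and ∇f(X̂) ∈ L². Then |E f(X) − E f(X̂)| ≤ ‖∇f(X̂)‖_{L²} · ‖E[X | X̂] − X̂‖_{L²} + (1/(1+ρ)) · [∇f]_ρ · E‖X − X̂‖^{1+ρ}. -/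
open MeasureTheory
open scoped ENNReal NNReal

lemma integrable_inner_of_memL2 {α : Type*} {mα : MeasurableSpace α} {μ : Measure α}
    {F : Type*} [NormedAddCommGroup F] [InnerProductSpace ℝ F]
    {f g : α → F} (hf : MemLp f 2 μ) (hg : MemLp g 2 μ) :
    Integrable (fun x => (inner ℝ (f x) (g x) : ℝ)) μ := by
  have h := L2.integrable_inner (𝕜 := ℝ) (hf.toLp f) (hg.toLp g)
  refine h.congr ?_
  filter_upwards [hf.coeFn_toLp, hg.coeFn_toLp] with x h1 h2
  rw [h1, h2]

lemma integrable_norm_mul_norm_of_memL2 {α : Type*} {mα : MeasurableSpace α} {μ : Measure α}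
    {F : Type*} [NormedAddCommGroup F] [InnerProductSpace ℝ F]
    {f g : α → F} (hf : MemLp f 2 μ) (hg : MemLp g 2 μ) :
    Integrable (fun x => ‖f x‖ * ‖g x‖) μ := by
  have h := integrable_inner_of_memL2 (F := ℝ) hf.norm hg.norm
  simpa [RCLike.inner_apply, mul_comm] using h

lemma taylor_holder_bound {F : Type*} [NormedAddCommGroup F] [InnerProductSpace ℝ F]
    [CompleteSpace F] (f : F → ℝ) (hdiff : Differentiable ℝ f)
    {ρ L : ℝ} (hρ0 : 0 ≤ ρ) (hL : 0 ≤ L)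
    (hHolder : ∀ x y, ‖gradient f x - gradient f y‖ ≤ L * ‖x - y‖ ^ ρ)
    (x y : F) :
    |f x - f y - (inner ℝ (gradient f y) (x - y) : ℝ)| ≤
      L / (1 + ρ) * ‖x - y‖ ^ (1 + ρ) := by
  have h1ρ : (0 : ℝ) < 1 + ρ := by linarith
  rcases eq_or_ne x y with rfl | hxy
  · simp [Real.zero_rpow h1ρ.ne']
  set v := x - y with hv
  have hvne : v ≠ 0 := sub_ne_zero.mpr hxy
  have hvpos : 0 < ‖v‖ := norm_pos_iff.mpr hvne
  set φ : ℝ → ℝ := fun t => (inner ℝ (gradient f (y + t • v)) v : ℝ) with hφ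
  have hg : ∀ t : ℝ, HasDerivAt (fun t : ℝ => f (y + t • v)) (φ t) t := by
    intro t
    have hc : HasDerivAt (fun t : ℝ => y + t • v) v t := by
      simpa using ((hasDerivAt_id t).smul_const v).const_add y
    have hf' : HasFDerivAt f (InnerProductSpace.toDual ℝ F (gradient f (y + t • v)))
        (y + t • v) := (hdiff (y + t • v)).hasGradientAt.hasFDerivAt
    simpa [hφ, InnerProductSpace.toDual_apply_apply, Function.comp_def] using hf'.comp_hasDerivAt t hc
  have hφm : Measurable φ := by
    have hde : φ = deriv (fun t : ℝ => f (y + t • v)) := funext fun t => ((hg t).deriv).symm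
    rw [hde]; exact measurable_deriv _
  have hbound : ∀ t ∈ Set.Icc (0:ℝ) 1, |φ t - φ 0| ≤ L * t ^ ρ * ‖v‖ ^ (1 + ρ) := by
    intro t ht
    have he : φ t - φ 0 =
        (inner ℝ (gradient f (y + t • v) - gradient f (y + (0:ℝ) • v)) v : ℝ) := by
      simp [hφ, inner_sub_left]
    rw [he]
    calc |(inner ℝ (gradient f (y + t • v) - gradient f (y + (0:ℝ) • v)) v : ℝ)|
        ≤ ‖gradient f (y + t • v) - gradient f (y + (0:ℝ) • v)‖ * ‖v‖ :=
          abs_real_inner_le_norm _ _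
      _ ≤ (L * ‖(y + t • v) - (y + (0:ℝ) • v)‖ ^ ρ) * ‖v‖ :=
          mul_le_mul_of_nonneg_right (hHolder _ _) (norm_nonneg _)
      _ = L * t ^ ρ * ‖v‖ ^ (1 + ρ) := by
          have h1 : (y + t • v) - (y + (0:ℝ) • v) = t • v := by
            simp
          rw [h1, norm_smul, Real.norm_of_nonneg ht.1,
            Real.mul_rpow ht.1 (norm_nonneg v), Real.rpow_add hvpos, Real.rpow_one]
          ring
  have hφint : IntervalIntegrable φ MeasureTheory.volume 0 1 := by
    rw [intervalIntegrable_iff_integrableOn_Icc_of_le zero_le_one]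
    refine Integrable.mono' (integrable_const (|φ 0| + L * ‖v‖ ^ (1 + ρ)))
      (hφm.aestronglyMeasurable.restrict) ?_
    filter_upwards [ae_restrict_mem measurableSet_Icc] with t ht
    have h1 := hbound t ht
    have htρ : t ^ ρ ≤ 1 := Real.rpow_le_one ht.1 ht.2 hρ0
    have hC : (0:ℝ) ≤ ‖v‖ ^ (1 + ρ) := Real.rpow_nonneg (norm_nonneg v) _
    have h2 : L * t ^ ρ * ‖v‖ ^ (1 + ρ) ≤ L * 1 * ‖v‖ ^ (1 + ρ) := by
      apply mul_le_mul_of_nonneg_right _ hC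
      exact mul_le_mul_of_nonneg_left htρ hL
    have h3 : |φ t| ≤ |φ 0| + |φ t - φ 0| := by
      have := abs_add_le (φ 0) (φ t - φ 0); simpa using this
    calc ‖φ t‖ = |φ t| := rfl
      _ ≤ |φ 0| + |φ t - φ 0| := h3
      _ ≤ |φ 0| + L * ‖v‖ ^ (1 + ρ) := by nlinarith
  have hftc : ∫ t in (0:ℝ)..1, φ t = f x - f y := by
    have h := intervalIntegral.integral_eq_sub_of_hasDerivAt
      (f := fun t : ℝ => f (y + t • v)) (fun t _ => hg t) hφint
    have h1 : y + (1:ℝ) • v = x := by simp [hv]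
    have h0 : y + (0:ℝ) • v = y := by simp
    rw [h]
    show f (y + (1:ℝ) • v) - f (y + (0:ℝ) • v) = f x - f y
    rw [h1, h0]
  have hφ0 : φ 0 = (inner ℝ (gradient f y) (x - y) : ℝ) := by simp [hφ, hv]
  have hint2 : IntervalIntegrable (fun t => φ t - φ 0) MeasureTheory.volume 0 1 :=
    hφint.sub intervalIntegrable_const
  have hkey : f x - f y - φ 0 = ∫ t in (0:ℝ)..1, (φ t - φ 0) := by
    rw [intervalIntegral.integral_sub hφint intervalIntegrable_const, hftc]
    simp
  have hcont : Continuous fun t : ℝ => t ^ ρ :=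
    continuous_iff_continuousAt.2 fun t => Real.continuousAt_rpow_const t ρ (Or.inr hρ0)
  have hce : IntervalIntegrable (fun t : ℝ => L * t ^ ρ * ‖v‖ ^ (1 + ρ))
      MeasureTheory.volume 0 1 :=
    ((continuous_const.mul hcont).mul continuous_const).intervalIntegrable 0 1
  rw [← hφ0, hkey]
  calc |∫ t in (0:ℝ)..1, (φ t - φ 0)| ≤ ∫ t in (0:ℝ)..1, |φ t - φ 0| :=
        intervalIntegral.abs_integral_le_integral_abs zero_le_one
    _ ≤ ∫ t in (0:ℝ)..1, L * t ^ ρ * ‖v‖ ^ (1 + ρ) :=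
        intervalIntegral.integral_mono_on zero_le_one hint2.abs hce hbound
    _ = L / (1 + ρ) * ‖v‖ ^ (1 + ρ) := by
        have he : (fun t : ℝ => L * t ^ ρ * ‖v‖ ^ (1 + ρ))
            = fun t : ℝ => (L * ‖v‖ ^ (1 + ρ)) * t ^ ρ := by funext t; ring
        rw [he, intervalIntegral.integral_const_mul,
          integral_rpow (Or.inl (by linarith : (-1:ℝ) < ρ)),
          Real.one_rpow, Real.zero_rpow (by positivity : ρ + 1 ≠ 0),
          show ρ + 1 = 1 + ρ from add_comm ρ 1]
        ring

/-- Quantization-based cubature error bound for functions with `ρ`-Hölder gradient: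
`|E f(X) − E f(X̂)| ≤ ‖∇f(X̂)‖_{L²} ‖E[X|X̂] − X̂‖_{L²} + (1/(1+ρ)) [∇f]_ρ E‖X − X̂‖^{1+ρ}`,
where `X̂ = q(X)` for a Borel function `q` taking finitely many values. -/
theorem stmt_14 {E : Type*} [NormedAddCommGroup E] [InnerProductSpace ℝ E]
    [FiniteDimensional ℝ E] [MeasurableSpace E] [BorelSpace E]
    {Ω : Type*} [MeasurableSpace Ω] (P : Measure Ω) [IsProbabilityMeasure P]
    (X : Ω → E) (hX : Measurable X) (hX2 : MemLp X 2 P)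
    (q : E → E) (hq : Measurable q) (hqfin : (Set.range q).Finite)
    (ρ : ℝ) (hρ : ρ ∈ Set.Icc (0 : ℝ) 1)
    (f : E → ℝ) (hdiff : Differentiable ℝ f)
    (L : ℝ) (hL : 0 ≤ L)
    (hHolder : ∀ x y, ‖gradient f x - gradient f y‖ ≤ L * ‖x - y‖ ^ ρ)
    (hfX : Integrable (fun ω => f (X ω)) P)
    (hfXq : Integrable (fun ω => f (q (X ω))) P)
    (hgrad2 : MemLp (fun ω => gradient f (q (X ω))) 2 P) :
    |(∫ ω, f (X ω) ∂P) - ∫ ω, f (q (X ω)) ∂P| ≤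
      (∫ ω, ‖gradient f (q (X ω))‖ ^ (2 : ℝ) ∂P) ^ ((1 : ℝ) / 2) *
        (∫ ω, ‖(P[X | MeasurableSpace.comap (fun ω => q (X ω)) inferInstance]) ω
            - q (X ω)‖ ^ (2 : ℝ) ∂P) ^ ((1 : ℝ) / 2) +
      1 / (1 + ρ) * L * ∫ ω, ‖X ω - q (X ω)‖ ^ (1 + ρ) ∂P := by
  classical
  obtain ⟨hρ0, hρ1⟩ := hρ
  have h1ρ : (0 : ℝ) < 1 + ρ := by linarith
  have hqX : Measurable fun ω => q (X ω) := hq.comp hX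
  have hm := measurable_iff_comap_le.mp hqX
  haveI : IsFiniteMeasure (P.trim hm) := isFiniteMeasure_trim hm
  set Y : Ω → E := P[X | MeasurableSpace.comap (fun ω => q (X ω)) inferInstance] with hY_def
  have hXint : Integrable X P := hX2.integrable one_le_two
  -- q (X ·) is in L²
  have hXh2 : MemLp (fun ω => q (X ω)) 2 P := by
    refine MemLp.of_bound hqX.aestronglyMeasurable
      ((hqfin.toFinset.sup fun w => ‖w‖₊ : ℝ≥0) : ℝ) (Filter.Eventually.of_forall fun ω => ?_)
    have hb : ‖q (X ω)‖₊ ≤ hqfin.toFinset.sup fun w => ‖w‖₊ :=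
      Finset.le_sup (hqfin.mem_toFinset.2 ⟨X ω, rfl⟩)
    exact_mod_cast hb
  -- factorization of Y through q ∘ X, hence Y is bounded and in L²
  have hYsm : StronglyMeasurable[MeasurableSpace.comap (fun ω => q (X ω)) inferInstance] Y :=
    stronglyMeasurable_condExp
  have hYconst : ∀ ω ω', q (X ω) = q (X ω') → Y ω = Y ω' := by
    intro ω ω' hqq
    obtain ⟨s', hs', hpre⟩ := hYsm.measurable (measurableSet_singleton (Y ω))
    have hω : ω ∈ (fun ω => q (X ω)) ⁻¹' s' := by
      rw [hpre]; exact rfl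
    have hω' : ω' ∈ (fun ω => q (X ω)) ⁻¹' s' := by
      have : q (X ω) ∈ s' := hω
      simpa [Set.mem_preimage, ← hqq] using this
    rw [hpre] at hω'
    have h2 := hω'
    simp only [Set.mem_preimage, Set.mem_singleton_iff] at h2
    exact h2.symm
  set h : E → E := fun w => if hw : ∃ ω, q (X ω) = w then Y hw.choose else 0 with hh
  have hYeq : ∀ ω, Y ω = h (q (X ω)) := by
    intro ω
    have hw : ∃ ω', q (X ω') = q (X ω) := ⟨ω, rfl⟩
    simp only [hh, dif_pos hw]
    exact (hYconst _ _ hw.choose_spec).symm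
  have hYfin : (Set.range Y).Finite := by
    apply (hqfin.image h).subset
    rintro _ ⟨ω, rfl⟩
    exact ⟨q (X ω), ⟨X ω, rfl⟩, (hYeq ω).symm⟩
  have hY2 : MemLp Y 2 P := by
    refine MemLp.of_bound ((hYsm.mono hm).aestronglyMeasurable)
      ((hYfin.toFinset.sup fun w => ‖w‖₊ : ℝ≥0) : ℝ) (Filter.Eventually.of_forall fun ω => ?_)
    have hb : ‖Y ω‖₊ ≤ hYfin.toFinset.sup fun w => ‖w‖₊ :=
      Finset.le_sup (hYfin.mem_toFinset.2 ⟨ω, rfl⟩)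
    exact_mod_cast hb
  have hYint : Integrable Y P := integrable_condExp
  -- key: ∫ ⟪G, Z⟫ splits as a finite sum of set integrals
  have hAmeas : ∀ w : E, MeasurableSet ((fun ω => q (X ω)) ⁻¹' {w}) :=
    fun w => hqX (measurableSet_singleton w)
  have hsum : ∀ Z : Ω → E, Integrable Z P →
      ∫ ω, (inner ℝ (gradient f (q (X ω))) (Z ω) : ℝ) ∂P
        = ∑ w ∈ hqfin.toFinset,
          (inner ℝ (gradient f w) (∫ ω in (fun ω => q (X ω)) ⁻¹' {w}, Z ω ∂P) : ℝ) := by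
    intro Z hZ
    have hrw : (fun ω => (inner ℝ (gradient f (q (X ω))) (Z ω) : ℝ))
        = fun ω => ∑ w ∈ hqfin.toFinset,
          ((fun ω' => q (X ω')) ⁻¹' {w}).indicator
            (fun ω' => (inner ℝ (gradient f w) (Z ω') : ℝ)) ω := by
      funext ω
      rw [Finset.sum_eq_single (q (X ω))]
      · exact (Set.indicator_of_mem
          (show ω ∈ (fun ω' => q (X ω')) ⁻¹' {q (X ω)} from Set.mem_singleton (q (X ω)))
          (fun ω' => (inner ℝ (gradient f (q (X ω))) (Z ω') : ℝ))).symm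
      · intro w hw hne
        refine Set.indicator_of_notMem ?_ (fun ω' => (inner ℝ (gradient f w) (Z ω') : ℝ))
        intro hmem
        exact hne (Set.mem_singleton_iff.1 (Set.mem_preimage.1 hmem)).symm
      · intro hnot
        exact absurd (hqfin.mem_toFinset.2 ⟨X ω, rfl⟩) hnot
    rw [hrw, integral_finset_sum]
    · refine Finset.sum_congr rfl fun w hw => ?_
      rw [integral_indicator (hAmeas w)]
      exact integral_inner hZ.restrict (gradient f w)
    · intro w hw
      exact (hZ.const_inner (gradient f w)).indicator (hAmeas w)
  have hXY : ∫ ω, (inner ℝ (gradient f (q (X ω))) (X ω) : ℝ) ∂P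
      = ∫ ω, (inner ℝ (gradient f (q (X ω))) (Y ω) : ℝ) ∂P := by
    rw [hsum X hXint, hsum Y hYint]
    refine Finset.sum_congr rfl fun w hw => ?_
    have hAm : MeasurableSet[MeasurableSpace.comap (fun ω => q (X ω)) inferInstance]
        ((fun ω => q (X ω)) ⁻¹' {w}) := ⟨{w}, measurableSet_singleton w, rfl⟩
    rw [hY_def, setIntegral_condExp hm hXint hAm]
  -- integrability of inner products
  have hGX : Integrable (fun ω => (inner ℝ (gradient f (q (X ω))) (X ω) : ℝ)) P :=
    integrable_inner_of_memL2 hgrad2 hX2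
  have hGXh : Integrable (fun ω => (inner ℝ (gradient f (q (X ω))) (q (X ω)) : ℝ)) P :=
    integrable_inner_of_memL2 hgrad2 hXh2
  have hGY : Integrable (fun ω => (inner ℝ (gradient f (q (X ω))) (Y ω) : ℝ)) P :=
    integrable_inner_of_memL2 hgrad2 hY2
  have hXmXh2 : MemLp (fun ω => X ω - q (X ω)) 2 P := hX2.sub hXh2
  have hYmXh2 : MemLp (fun ω => Y ω - q (X ω)) 2 P := hY2.sub hXh2
  have hint1 : Integrable (fun ω => (inner ℝ (gradient f (q (X ω))) (X ω - q (X ω)) : ℝ)) P :=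
    integrable_inner_of_memL2 hgrad2 hXmXh2
  have hint2 : Integrable (fun ω => (inner ℝ (gradient f (q (X ω))) (Y ω - q (X ω)) : ℝ)) P :=
    integrable_inner_of_memL2 hgrad2 hYmXh2
  have hfsub : Integrable (fun ω => f (X ω) - f (q (X ω))) P := hfX.sub hfXq
  have hRint : Integrable (fun ω => f (X ω) - f (q (X ω))
      - (inner ℝ (gradient f (q (X ω))) (X ω - q (X ω)) : ℝ)) P := hfsub.sub hint1
  -- switch X to Y in the inner-product integral
  have e2 : ∫ ω, (inner ℝ (gradient f (q (X ω))) (X ω - q (X ω)) : ℝ) ∂P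
      = ∫ ω, (inner ℝ (gradient f (q (X ω))) (Y ω - q (X ω)) : ℝ) ∂P := by
    simp only [inner_sub_right]
    rw [integral_sub hGX hGXh, integral_sub hGY hGXh, hXY]
  have e1 : ∫ ω, (f (X ω) - f (q (X ω))
        - (inner ℝ (gradient f (q (X ω))) (X ω - q (X ω)) : ℝ)) ∂P
      = (∫ ω, f (X ω) ∂P) - (∫ ω, f (q (X ω)) ∂P)
        - ∫ ω, (inner ℝ (gradient f (q (X ω))) (X ω - q (X ω)) : ℝ) ∂P := by
    rw [integral_sub hfsub hint1, integral_sub hfX hfXq]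
  have hsplit : (∫ ω, f (X ω) ∂P) - ∫ ω, f (q (X ω)) ∂P
      = (∫ ω, (inner ℝ (gradient f (q (X ω))) (Y ω - q (X ω)) : ℝ) ∂P)
        + ∫ ω, (f (X ω) - f (q (X ω))
            - (inner ℝ (gradient f (q (X ω))) (X ω - q (X ω)) : ℝ)) ∂P := by
    rw [e1, ← e2]; ring
  -- Cauchy–Schwarz term
  have hof2 : ENNReal.ofReal (2:ℝ) = 2 := by norm_num
  have hCS : |∫ ω, (inner ℝ (gradient f (q (X ω))) (Y ω - q (X ω)) : ℝ) ∂P|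
      ≤ (∫ ω, ‖gradient f (q (X ω))‖ ^ (2 : ℝ) ∂P) ^ ((1 : ℝ) / 2) *
        (∫ ω, ‖Y ω - q (X ω)‖ ^ (2 : ℝ) ∂P) ^ ((1 : ℝ) / 2) := by
    have h1 : |∫ ω, (inner ℝ (gradient f (q (X ω))) (Y ω - q (X ω)) : ℝ) ∂P|
        ≤ ∫ ω, |(inner ℝ (gradient f (q (X ω))) (Y ω - q (X ω)) : ℝ)| ∂P := by
      simpa [Real.norm_eq_abs] using
        norm_integral_le_integral_norm (fun ω => (inner ℝ (gradient f (q (X ω))) (Y ω - q (X ω)) : ℝ))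
    have h2 : ∫ ω, |(inner ℝ (gradient f (q (X ω))) (Y ω - q (X ω)) : ℝ)| ∂P
        ≤ ∫ ω, ‖gradient f (q (X ω))‖ * ‖Y ω - q (X ω)‖ ∂P := by
      refine integral_mono hint2.abs (integrable_norm_mul_norm_of_memL2 hgrad2 hYmXh2) ?_
      intro ω
      exact abs_real_inner_le_norm _ _
    have hpq : Real.HolderConjugate 2 2 := Real.HolderConjugate.two_two
    have h3 := integral_mul_norm_le_Lp_mul_Lq (μ := P) hpq (hof2 ▸ hgrad2) (hof2 ▸ hYmXh2)
    linarith
  -- Taylor remainder term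
  have hTaylor : ∀ ω, |f (X ω) - f (q (X ω))
      - (inner ℝ (gradient f (q (X ω))) (X ω - q (X ω)) : ℝ)|
      ≤ L / (1 + ρ) * ‖X ω - q (X ω)‖ ^ (1 + ρ) := fun ω =>
    taylor_holder_bound f hdiff hρ0 hL hHolder (X ω) (q (X ω))
  have hnormint : Integrable (fun ω => ‖X ω - q (X ω)‖ ^ (1 + ρ)) P := by
    have hle : ENNReal.ofReal (1 + ρ) ≤ 2 := by
      rw [← hof2]
      exact ENNReal.ofReal_le_ofReal (by linarith)
    have hmem : MemLp (fun ω => X ω - q (X ω)) (ENNReal.ofReal (1 + ρ)) P :=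
      hXmXh2.mono_exponent hle
    have hne0 : ENNReal.ofReal (1 + ρ) ≠ 0 := by
      simp [ENNReal.ofReal_eq_zero, not_le, h1ρ]
    have := hmem.integrable_norm_rpow hne0 ENNReal.ofReal_ne_top
    simpa [ENNReal.toReal_ofReal h1ρ.le] using this
  have hR : |∫ ω, (f (X ω) - f (q (X ω))
        - (inner ℝ (gradient f (q (X ω))) (X ω - q (X ω)) : ℝ)) ∂P|
      ≤ 1 / (1 + ρ) * L * ∫ ω, ‖X ω - q (X ω)‖ ^ (1 + ρ) ∂P := by
    have h1 : |∫ ω, (f (X ω) - f (q (X ω))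
          - (inner ℝ (gradient f (q (X ω))) (X ω - q (X ω)) : ℝ)) ∂P|
        ≤ ∫ ω, |f (X ω) - f (q (X ω))
          - (inner ℝ (gradient f (q (X ω))) (X ω - q (X ω)) : ℝ)| ∂P := by
      simpa [Real.norm_eq_abs] using norm_integral_le_integral_norm
        (fun ω => f (X ω) - f (q (X ω))
          - (inner ℝ (gradient f (q (X ω))) (X ω - q (X ω)) : ℝ))
    have h2 : ∫ ω, |f (X ω) - f (q (X ω))
          - (inner ℝ (gradient f (q (X ω))) (X ω - q (X ω)) : ℝ)| ∂P
        ≤ ∫ ω, L / (1 + ρ) * ‖X ω - q (X ω)‖ ^ (1 + ρ) ∂P :=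
      integral_mono hRint.abs (hnormint.const_mul _) hTaylor
    rw [integral_const_mul] at h2
    calc |∫ ω, (f (X ω) - f (q (X ω))
          - (inner ℝ (gradient f (q (X ω))) (X ω - q (X ω)) : ℝ)) ∂P|
        ≤ L / (1 + ρ) * ∫ ω, ‖X ω - q (X ω)‖ ^ (1 + ρ) ∂P := le_trans h1 h2
      _ = 1 / (1 + ρ) * L * ∫ ω, ‖X ω - q (X ω)‖ ^ (1 + ρ) ∂P := by ring
  calc |(∫ ω, f (X ω) ∂P) - ∫ ω, f (q (X ω)) ∂P|
      = |(∫ ω, (inner ℝ (gradient f (q (X ω))) (Y ω - q (X ω)) : ℝ) ∂P)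
        + ∫ ω, (f (X ω) - f (q (X ω))
            - (inner ℝ (gradient f (q (X ω))) (X ω - q (X ω)) : ℝ)) ∂P| := by rw [hsplit]
    _ ≤ |∫ ω, (inner ℝ (gradient f (q (X ω))) (Y ω - q (X ω)) : ℝ) ∂P|
        + |∫ ω, (f (X ω) - f (q (X ω))
            - (inner ℝ (gradient f (q (X ω))) (X ω - q (X ω)) : ℝ)) ∂P| := abs_add_le _ _
    _ ≤ _ := add_le_add hCS hR
end

section
/- Let n ≥ 1 and let ξ₁,…,ξ_n ∈ [0,1]. Then the L¹-quantization error of the set {ξ₁,…,ξ_n} with respect to the uniform distribution on [0,1] is bounded by the star discrepancy: ∫₀¹ min_{1≤i≤n} |u − ξ_i| du ≤ D_n^*(ξ₁,…,ξ_n). -/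
open MeasureTheory

/-- The `L¹`-quantization error of `{ξ₁,…,ξ_n} ⊂ [0,1]` for the uniform distribution on
`[0,1]` is bounded by the star discrepancy:
`∫₀¹ min_i |u − ξ_i| du ≤ sup_{u∈[0,1]} |(1/n)·#{i : ξ_i ≤ u} − u|`. -/
theorem stmt_15 (n : ℕ) (hn : 1 ≤ n) (ξ : Fin n → ℝ)
    (hξ : ∀ i, ξ i ∈ Set.Icc (0 : ℝ) 1) :
    (∫ u in Set.Icc (0 : ℝ) 1, ⨅ i, |u - ξ i|) ≤
      ⨆ u : Set.Icc (0 : ℝ) 1,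
        |((Set.ncard {i : Fin n | ξ i ≤ (u : ℝ)}) : ℝ) / n - (u : ℝ)| := by
  classical
  have hnpos : (0:ℝ) < n := by exact_mod_cast hn
  haveI : Nonempty (Fin n) := ⟨⟨0, hn⟩⟩
  set D := ⨆ u : Set.Icc (0 : ℝ) 1,
      |((Set.ncard {i : Fin n | ξ i ≤ (u : ℝ)}) : ℝ) / n - (u : ℝ)| with hDdef
  -- the counting ratio is in [0,1]
  have hNle : ∀ t : ℝ, ((Set.ncard {i : Fin n | ξ i ≤ t}) : ℝ) / n ≤ 1 := by
    intro t
    rw [div_le_one hnpos]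
    have h1 : Set.ncard {i : Fin n | ξ i ≤ t} ≤ Set.ncard (Set.univ : Set (Fin n)) :=
      Set.ncard_le_ncard (Set.subset_univ _) Set.finite_univ
    have h2 : Set.ncard (Set.univ : Set (Fin n)) = n := by
      simp [Set.ncard_univ]
    exact_mod_cast h1.trans_eq h2
  have hbdd : BddAbove (Set.range fun u : Set.Icc (0:ℝ) 1 =>
      |((Set.ncard {i : Fin n | ξ i ≤ (u : ℝ)}) : ℝ) / n - (u : ℝ)|) := by
    refine ⟨2, ?_⟩
    rintro _ ⟨u, rfl⟩
    have h1 := hNle (u : ℝ)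
    have h2 : (0:ℝ) ≤ ((Set.ncard {i : Fin n | ξ i ≤ (u:ℝ)}) : ℝ) / n := by positivity
    have h3 := u.2.1
    have h4 := u.2.2
    rw [abs_le]
    constructor <;> linarith
  have hD_ub : ∀ t : ℝ, t ∈ Set.Icc (0:ℝ) 1 →
      |((Set.ncard {i : Fin n | ξ i ≤ t}) : ℝ) / n - t| ≤ D := by
    intro t ht
    exact le_ciSup hbdd (⟨t, ht⟩ : Set.Icc (0:ℝ) 1)
  have hbb : ∀ u : ℝ, BddBelow (Set.range fun i : Fin n => |u - ξ i|) := by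
    intro u
    exact ⟨0, by rintro _ ⟨j, rfl⟩; exact abs_nonneg _⟩
  -- Key pointwise bound
  have key : ∀ u : ℝ, u ∈ Set.Icc (0:ℝ) 1 → (⨅ i, |u - ξ i|) ≤ D := by
    intro u hu
    by_cases hall : ∀ i, ξ i ≤ u
    · -- all points are ≤ u; use the maximum
      obtain ⟨i0, -, hi0⟩ := Finset.exists_max_image Finset.univ ξ ⟨⟨0,hn⟩, Finset.mem_univ _⟩
      have hset : {i : Fin n | ξ i ≤ ξ i0} = Set.univ := by
        ext i; simp [hi0 i (Finset.mem_univ i)]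
      have hcount : ((Set.ncard {i : Fin n | ξ i ≤ ξ i0}) : ℝ) / n = 1 := by
        rw [hset]
        rw [Set.ncard_univ]
        simp
        omega
      have hDa := hD_ub (ξ i0) (hξ i0)
      rw [hcount] at hDa
      have h1a : |(1:ℝ) - ξ i0| = 1 - ξ i0 := abs_of_nonneg (by linarith [(hξ i0).2])
      rw [h1a] at hDa
      have hle : (⨅ i, |u - ξ i|) ≤ |u - ξ i0| := ciInf_le (hbb u) i0
      have : |u - ξ i0| = u - ξ i0 := abs_of_nonneg (by linarith [hall i0])
      rw [this] at hle
      linarith [hu.2]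
    · push_neg at hall
      by_cases hnone : ∀ i, u < ξ i
      · -- all points are > u; use the minimum
        obtain ⟨j0, -, hj0⟩ := Finset.exists_min_image Finset.univ ξ ⟨⟨0,hn⟩, Finset.mem_univ _⟩
        have hbu : u < ξ j0 := hnone j0
        have hb1 : ξ j0 ≤ 1 := (hξ j0).2
        have hbD : ξ j0 ≤ D := by
          refine le_of_forall_pos_le_add fun ε hε => ?_
          set t := max (ξ j0 - ε) 0 with htdef
          have ht01 : t ∈ Set.Icc (0:ℝ) 1 := ⟨le_max_right _ _, max_le (by linarith) zero_le_one⟩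
          have htb : t < ξ j0 := max_lt (by linarith) (lt_of_le_of_lt hu.1 hbu)
          have hset : {i : Fin n | ξ i ≤ t} = ∅ := by
            ext i
            simp only [Set.mem_setOf_eq, Set.mem_empty_iff_false, iff_false, not_le]
            exact lt_of_lt_of_le htb (hj0 i (Finset.mem_univ i))
          have hDt := hD_ub t ht01
          rw [hset] at hDt
          simp only [Set.ncard_empty, Nat.cast_zero, zero_div, zero_sub, abs_neg] at hDt
          rw [abs_of_nonneg ht01.1] at hDt
          have : ξ j0 - ε ≤ t := le_max_left _ _
          linarith
        have hle : (⨅ i, |u - ξ i|) ≤ |u - ξ j0| := ciInf_le (hbb u) j0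
        have : |u - ξ j0| = ξ j0 - u := by rw [abs_sub_comm]; exact abs_of_nonneg (by linarith)
        rw [this] at hle
        linarith [hu.1]
      · -- there are points on both sides
        push_neg at hnone
        obtain ⟨j1, hj1⟩ := hnone
        obtain ⟨j2, hj2⟩ := hall
        obtain ⟨ia, hiaS, hia⟩ := Finset.exists_max_image
          (Finset.univ.filter fun i => ξ i ≤ u) ξ
          ⟨j1, by simp [hj1]⟩
        obtain ⟨ib, hibS, hib⟩ := Finset.exists_min_image
          (Finset.univ.filter fun i => ¬ ξ i ≤ u) ξ
          ⟨j2, by simp [hj2]⟩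
        have hiau : ξ ia ≤ u := by simpa using hiaS
        have hibu : u < ξ ib := by
          have := hibS; simp only [Finset.mem_filter, Finset.mem_univ, true_and, not_le] at this
          exact this
        have hia' : ∀ i, ξ i ≤ u → ξ i ≤ ξ ia := fun i hi => hia i (by simp [hi])
        have hib' : ∀ i, u < ξ i → ξ ib ≤ ξ i := fun i hi =>
          hib i (by simp only [Finset.mem_filter, Finset.mem_univ, true_and, not_le]; exact hi)
        -- N is constant on [ξ ia, ξ ib)
        have hseta : {i : Fin n | ξ i ≤ ξ ia} = {i : Fin n | ξ i ≤ u} := by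
          ext i
          simp only [Set.mem_setOf_eq]
          exact ⟨fun h => h.trans hiau, fun h => hia' i h⟩
        have hDa := hD_ub (ξ ia) (hξ ia)
        rw [hseta] at hDa
        set c := ((Set.ncard {i : Fin n | ξ i ≤ u}) : ℝ) / n with hcdef
        have hDb : |c - ξ ib| ≤ D := by
          refine le_of_forall_pos_le_add fun ε hε => ?_
          set t := max (ξ ib - ε) u with htdef
          have ht01 : t ∈ Set.Icc (0:ℝ) 1 :=
            ⟨le_trans hu.1 (le_max_right _ _), max_le (by linarith [(hξ ib).2]) hu.2⟩
          have htb : t < ξ ib := max_lt (by linarith) hibu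
          have hset : {i : Fin n | ξ i ≤ t} = {i : Fin n | ξ i ≤ u} := by
            ext i
            simp only [Set.mem_setOf_eq]
            constructor
            · intro h
              by_contra hcon
              push_neg at hcon
              exact absurd (h.trans_lt htb) (not_lt.mpr (hib' i hcon))
            · intro h
              exact h.trans (le_max_right _ _)
          have hDt := hD_ub t ht01
          rw [hset] at hDt
          have h1 : |c - ξ ib| ≤ |c - t| + |t - ξ ib| := abs_sub_le _ _ _
          have h2 : |t - ξ ib| = ξ ib - t := by
            rw [abs_sub_comm]; exact abs_of_nonneg (by linarith)
          have h3 : ξ ib - t ≤ ε := by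
            have : ξ ib - ε ≤ t := le_max_left _ _
            linarith
          rw [h2] at h1
          linarith
        have hle1 : (⨅ i, |u - ξ i|) ≤ u - ξ ia := by
          have h := ciInf_le (hbb u) ia
          rwa [abs_of_nonneg (by linarith)] at h
        have hle2 : (⨅ i, |u - ξ i|) ≤ ξ ib - u := by
          have h := ciInf_le (hbb u) ib
          rwa [abs_sub_comm, abs_of_nonneg (by linarith)] at h
        have habs1 : c - ξ ia ≤ D := (le_abs_self _).trans hDa
        have habs2 : ξ ib - c ≤ D := by
          have := (neg_abs_le (c - ξ ib)); linarith
        linarith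
  -- continuity / integrability of the quantization distance
  have key2 : ∀ x y : ℝ, (⨅ i, |x - ξ i|) ≤ (⨅ i, |y - ξ i|) + |x - y| := by
    intro x y
    rw [← sub_le_iff_le_add]
    refine le_ciInf fun i => ?_
    have h1 : (⨅ i, |x - ξ i|) ≤ |x - ξ i| := ciInf_le (hbb x) i
    have h2 : |x - ξ i| ≤ |x - y| + |y - ξ i| := by
      calc |x - ξ i| = |(x - y) + (y - ξ i)| := by ring_nf
        _ ≤ |x - y| + |y - ξ i| := abs_add_le _ _
    linarith
  have hcont : Continuous fun u : ℝ => ⨅ i, |u - ξ i| := by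
    refine (LipschitzWith.of_dist_le_mul (K := 1) fun x y => ?_).continuous
    rw [NNReal.coe_one, one_mul, Real.dist_eq, Real.dist_eq, abs_sub_le_iff]
    constructor
    · have := key2 x y; linarith
    · have := key2 y x; rw [abs_sub_comm] at this; linarith
  have hint : IntegrableOn (fun u : ℝ => ⨅ i, |u - ξ i|) (Set.Icc 0 1) :=
    hcont.integrableOn_Icc
  calc (∫ u in Set.Icc (0 : ℝ) 1, ⨅ i, |u - ξ i|)
      ≤ ∫ _u in Set.Icc (0 : ℝ) 1, D := by
        refine setIntegral_mono_on hint (integrableOn_const ?_)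
          measurableSet_Icc key
        simp [Real.volume_Icc]
    _ = D := by
        simp [Real.volume_Icc]
end

section
/- Let K ⊆ ℝ^d be a convex cone with vertex 0, i.e. K is convex, 0 ∈ K, and λx ∈ K for every x ∈ K and λ ≥ 0, and assume λ_d(K) > 0. Then inf{ λ_d(B(x,t)∩K)/λ_d(B(x,t)) : x ∈ K, t > 0 } = λ_d(B(0,1)∩K)/V_d. -/
open MeasureTheory Metric
open scoped ENNReal NNReal Pointwise

/-- For a convex cone `K` of vertex `0` with positive Lebesgue (Haar) measure,
the infimum of the ratios `λ_d(B(x,t)∩K)/λ_d(B(x,t))` over `x ∈ K` and `t > 0`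
equals `λ_d(B(0,1)∩K)/V_d`. -/
theorem stmt_16 {E : Type*} [NormedAddCommGroup E] [NormedSpace ℝ E]
    [FiniteDimensional ℝ E] [MeasurableSpace E] [BorelSpace E]
    (d : ℕ) (hd : 1 ≤ d) (hdim : Module.finrank ℝ E = d)
    (μ : Measure E) [μ.IsAddHaarMeasure]
    (K : Set E) (hKconv : Convex ℝ K) (hK0 : (0 : E) ∈ K)
    (hKcone : ∀ x ∈ K, ∀ c : ℝ, 0 ≤ c → c • x ∈ K)
    (hKpos : 0 < μ K) :
    sInf {z : ℝ | ∃ x ∈ K, ∃ t : ℝ, 0 < t ∧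
        z = (μ (closedBall x t ∩ K)).toReal / (μ (closedBall x t)).toReal}
      = (μ (closedBall 0 1 ∩ K)).toReal / (μ (closedBall 0 1)).toReal := by
  set z₀ : ℝ := (μ (closedBall 0 1 ∩ K)).toReal / (μ (closedBall 0 1)).toReal with hz₀
  have hmem : z₀ ∈ {z : ℝ | ∃ x ∈ K, ∃ t : ℝ, 0 < t ∧
      z = (μ (closedBall x t ∩ K)).toReal / (μ (closedBall x t)).toReal} :=
    ⟨0, hK0, 1, one_pos, rfl⟩
  have hfin : ∀ (x : E) (t : ℝ), μ (closedBall x t) ≠ ∞ :=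
    fun x t => (measure_closedBall_lt_top).ne
  -- lower bound
  have hlb : ∀ z ∈ {z : ℝ | ∃ x ∈ K, ∃ t : ℝ, 0 < t ∧
      z = (μ (closedBall x t ∩ K)).toReal / (μ (closedBall x t)).toReal}, z₀ ≤ z := by
    rintro z ⟨x, hx, t, ht, rfl⟩
    have hKt : t • K = K := by
      apply Set.Subset.antisymm
      · rintro y ⟨w, hw, rfl⟩
        exact hKcone w hw t ht.le
      · intro y hy
        refine ⟨t⁻¹ • y, hKcone y hy t⁻¹ (by positivity), ?_⟩
        simp [smul_smul, mul_inv_cancel₀ ht.ne']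
    have hsmul : t • (closedBall (0 : E) 1 ∩ K) = closedBall 0 t ∩ K := by
      rw [Set.smul_set_inter₀ ht.ne', hKt, _root_.smul_closedBall _ _ zero_le_one,
        smul_zero, Real.norm_eq_abs, abs_of_pos ht, mul_one]
    -- translate into closedBall x t ∩ K
    have hsub : (fun y => x + y) '' (closedBall (0 : E) t ∩ K) ⊆ closedBall x t ∩ K := by
      rintro _ ⟨y, ⟨hy1, hy2⟩, rfl⟩
      constructor
      · simpa [dist_eq_norm] using mem_closedBall_iff_norm.1 hy1
      · have h2 : (2 : ℝ) • ((1/2 : ℝ) • x + (1/2 : ℝ) • y) ∈ K := by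
          apply hKcone _ _ 2 (by norm_num)
          exact hKconv hx hy2 (by norm_num) (by norm_num) (by norm_num)
        have : (2 : ℝ) • ((1/2 : ℝ) • x + (1/2 : ℝ) • y) = x + y := by
          rw [smul_add, smul_smul, smul_smul]; norm_num
        rwa [this] at h2
    set c : ℝ≥0∞ := ENNReal.ofReal (t ^ Module.finrank ℝ E) with hc
    have hcval : c.toReal = t ^ Module.finrank ℝ E := by
      rw [hc, ENNReal.toReal_ofReal (by positivity)]
    have hcpos : (0 : ℝ) < c.toReal := by rw [hcval]; positivity
    have hnum : c * μ (closedBall (0 : E) 1 ∩ K) ≤ μ (closedBall x t ∩ K) := by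
      calc c * μ (closedBall (0 : E) 1 ∩ K)
          = μ (t • (closedBall (0 : E) 1 ∩ K)) := by
            rw [Measure.addHaar_smul, abs_of_pos (by positivity)]
        _ = μ ((fun y => x + y) '' (closedBall (0 : E) t ∩ K)) := by
            rw [hsmul, Set.image_add_left, measure_preimage_add]
        _ ≤ μ (closedBall x t ∩ K) := measure_mono hsub
    have hden : μ (closedBall x t) = c * μ (closedBall (0 : E) 1) :=
      Measure.addHaar_closedBall' μ x ht.le
    have hnum' : c.toReal * (μ (closedBall (0 : E) 1 ∩ K)).toReal
        ≤ (μ (closedBall x t ∩ K)).toReal := by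
      rw [← ENNReal.toReal_mul]
      apply ENNReal.toReal_mono
      · exact (measure_mono Set.inter_subset_left).trans_lt measure_closedBall_lt_top |>.ne
      · exact hnum
    have hden' : (μ (closedBall x t)).toReal = c.toReal * (μ (closedBall (0 : E) 1)).toReal := by
      rw [hden, ENNReal.toReal_mul]
    have hB1pos : (0 : ℝ) < (μ (closedBall (0 : E) 1)).toReal :=
      ENNReal.toReal_pos (measure_closedBall_pos μ 0 one_pos).ne' (hfin 0 1)
    rw [hz₀, hden']
    rw [div_le_div_iff₀ hB1pos (by positivity)]
    calc (μ (closedBall (0:E) 1 ∩ K)).toReal * (c.toReal * (μ (closedBall (0:E) 1)).toReal)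
        = (c.toReal * (μ (closedBall (0:E) 1 ∩ K)).toReal) * (μ (closedBall (0:E) 1)).toReal := by
          ring
      _ ≤ (μ (closedBall x t ∩ K)).toReal * (μ (closedBall (0:E) 1)).toReal :=
          mul_le_mul_of_nonneg_right hnum' ENNReal.toReal_nonneg
  exact le_antisymm (csInf_le ⟨z₀, hlb⟩ hmem) (le_csInf ⟨z₀, hmem⟩ hlb)
end
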